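/- Let u be an infinite word over a finite alphabet A with language L(u) closed under reversal and D(u) < +∞. Then there exists a positive integer K such that for every factor w ∈ L(u) of length at least K: if w is not a palindrome then the graph Γ(w) is a tree, and if w is a palindrome then the graph Θ(w) is a tree. -/

import Mathlib

namespace ZDC

variable {A : Type*}

/-- The finite word `u_i u_{i+1} ⋯ u_{i+n-1}` occurring at position `i` in `u`. -/
def factorAt (u : ℕ → A) (i n : ℕ) : List A := (List.range n).map (fun j => u (i + j))

/-- `w` occurs at index `i` in the infinite word `u`. -/
def OccursAt (u : ℕ → A) (w : List A) (i : ℕ) : Prop := w = factorAt u i w.length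

/-- The language of the infinite word `u`: the set of its factors. -/
def Lang (u : ℕ → A) : Set (List A) := {w | ∃ i, OccursAt u w i}

/-- The language of `u` is closed under reversal. -/
def ClosedUnderReversal (u : ℕ → A) : Prop := ∀ w ∈ Lang u, w.reverse ∈ Lang u

/-- Number of distinct palindromic factors of a finite word (the empty word counts). -/
noncomputable def palCount (w : List A) : ℕ := {v : List A | v <:+: w ∧ v.reverse = v}.ncard

/-- Palindromic defect of a finite word: `|w| + 1 - p(w)`. -/
noncomputable def wordDefect (w : List A) : ℕ := w.length + 1 - palCount w

/-- Palindromic defect of an infinite word: sup of defects of its factors, in `ℕ∞`. -/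
noncomputable def Defect (u : ℕ → A) : ℕ∞ := ⨆ w ∈ Lang u, (wordDefect w : ℕ∞)

/-- `u` contains infinitely many palindromic factors. -/
def Palindromic (u : ℕ → A) : Prop := ∀ N, ∃ w ∈ Lang u, N ≤ w.length ∧ w.reverse = w

/-- `u` is (purely) periodic: `u = zzz⋯` for a nonempty `z`. -/
def Periodic (u : ℕ → A) : Prop := ∃ p, 0 < p ∧ ∀ n, u (n + p) = u n

/-- `u` is eventually periodic: `u = v zzz⋯`. -/
def EventuallyPeriodic (u : ℕ → A) : Prop := ∃ p, 0 < p ∧ ∃ N, ∀ n ≥ N, u (n + p) = u n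

/-- `r` is a complete return word to `w` in `u`: it stretches from one occurrence of `w`
to the next one (inclusively). -/
def IsCompleteReturn (u : ℕ → A) (w r : List A) : Prop :=
  ∃ i j, i < j ∧ OccursAt u w i ∧ OccursAt u w j ∧
    (∀ k, i < k → k < j → ¬ OccursAt u w k) ∧
    r = factorAt u i (j + w.length - i)

/-- `c` is a complete mirror return to `w` in `u`. -/
def IsCompleteMirrorReturn (u : ℕ → A) (w c : List A) : Prop :=
  c ∈ Lang u ∧
  ¬ w <:+: (c.drop 1).dropLast ∧ ¬ w.reverse <:+: (c.drop 1).dropLast ∧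
  ((w <+: c ∧ w.reverse <:+ c) ∨ (w.reverse <+: c ∧ w <:+ c))

/-- Occurrences of `w` and its reversal alternate in `u`. -/
def Alternate (u : ℕ → A) (w : List A) : Prop :=
  (∀ i j, i < j → OccursAt u w i → OccursAt u w j →
    (∀ k, i < k → k < j → ¬ OccursAt u w k) →
    ∃ k, i ≤ k ∧ k ≤ j ∧ OccursAt u w.reverse k) ∧
  (∀ i j, i < j → OccursAt u w.reverse i → OccursAt u w.reverse j →
    (∀ k, i < k → k < j → ¬ OccursAt u w.reverse k) →
    ∃ k, i ≤ k ∧ k ≤ j ∧ OccursAt u w k)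

/-- Left extensions `E⁻(w)`. -/
def Eminus (u : ℕ → A) (w : List A) : Set A := {a | a :: w ∈ Lang u}

/-- Right extensions `E⁺(w)`. -/
def Eplus (u : ℕ → A) (w : List A) : Set A := {b | w ++ [b] ∈ Lang u}

/-- Bilateral extensions `E(w)`. -/
def Eboth (u : ℕ → A) (w : List A) : Set (A × A) := {p | p.1 :: (w ++ [p.2]) ∈ Lang u}

/-- Symmetric bilateral extensions `E⁼(w)`. -/
def Esym (u : ℕ → A) (w : List A) : Set A := {a | a :: (w ++ [a]) ∈ Lang u}

/-- Bilateral multiplicity `m(w) = #E(w) − #E⁺(w) − #E⁻(w) + 1`. -/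
noncomputable def mult (u : ℕ → A) (w : List A) : ℤ :=
  ((Eboth u w).ncard : ℤ) - (Eplus u w).ncard - (Eminus u w).ncard + 1

/-- `w` is a bispecial factor of `u`. -/
def Bispecial (u : ℕ → A) (w : List A) : Prop :=
  2 ≤ (Eminus u w).ncard ∧ 2 ≤ (Eplus u w).ncard

/-- The bipartite extension graph `Γ(w)` with vertex set `E⁻(w) ⊔ E⁺(w)`. -/
def GammaGraph (u : ℕ → A) (w : List A) : SimpleGraph (↥(Eminus u w) ⊕ ↥(Eplus u w)) :=
  SimpleGraph.fromRel (fun x y =>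
    ∃ (a : ↥(Eminus u w)) (b : ↥(Eplus u w)),
      x = Sum.inl a ∧ y = Sum.inr b ∧ ((a : A), (b : A)) ∈ Eboth u w)

/-- The graph `Θ(w)` on the vertex set `E⁻(w)` for a palindrome `w`. -/
def ThetaGraph (u : ℕ → A) (w : List A) : SimpleGraph (↥(Eminus u w)) :=
  SimpleGraph.fromRel (fun a b => ((a : A), (b : A)) ∈ Eboth u w)

/-- Factor complexity `C(n)`. -/
noncomputable def complexity (u : ℕ → A) (n : ℕ) : ℕ :=
  {w ∈ Lang u | w.length = n}.ncard

/-- Palindromic complexity `P(n)`. -/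
noncomputable def palComplexity (u : ℕ → A) (n : ℕ) : ℕ :=
  {w ∈ Lang u | w.length = n ∧ w.reverse = w}.ncard

/-- Extension of a morphism (given by its letter images) to finite words. -/
def Apply (φ : A → List A) (x : List A) : List A := x.flatMap φ

/-- A morphism is primitive if some power maps each letter to a word containing all letters. -/
def Primitive (φ : A → List A) : Prop :=
  ∃ k, 1 ≤ k ∧ ∀ a b : A, b ∈ (Apply φ)^[k] [a]

/-- `u` is a fixed point of `φ`: the image of every prefix of `u` is again a prefix of `u`. -/
def IsFixedPoint (φ : A → List A) (u : ℕ → A) : Prop :=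
  ∀ n, Apply φ (factorAt u 0 n) = factorAt u 0 (Apply φ (factorAt u 0 n)).length

/-- `ψ ▷ φ`: `ψ` is a left conjugate of `φ` with conjugate word `w`,
i.e. `φ(a)w = wψ(a)` for every letter `a`. -/
def LeftConj (ψ φ : A → List A) (w : List A) : Prop :=
  ∀ a, φ a ++ w = w ++ ψ a

/-- A morphism is cyclic if all images of letters are powers of a common word. -/
def Cyclic (φ : A → List A) : Prop :=
  ∃ w : List A, ∀ a, ∃ k : ℕ, φ a = (List.replicate k w).flatten

/-- First letter (as an `Option`) of the image of a letter. -/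
def Fst (φ : A → List A) : A → Option A := fun a => (φ a).head?

/-- Last letter (as an `Option`) of the image of a letter. -/
def Lst (φ : A → List A) : A → Option A := fun a => (φ a).getLast?

/-- `φL` is the leftmost conjugate of `φ`: a left conjugate whose first-letter map
is not constant. -/
def IsLeftmostConj (φL φ : A → List A) : Prop :=
  (∃ w, LeftConj φL φ w) ∧ ¬ (∀ a b, Fst φL a = Fst φL b)

/-- `φR` is the rightmost conjugate of `φ`: a right conjugate whose last-letter map
is not constant. -/
def IsRightmostConj (φR φ : A → List A) : Prop :=
  (∃ w, LeftConj φ φR w) ∧ ¬ (∀ a b, Lst φR a = Lst φR b)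

/-- A marked morphism: acyclic, and the first-letter map of its leftmost conjugate and
the last-letter map of its rightmost conjugate are injective. -/
def Marked (φ : A → List A) : Prop :=
  ¬ Cyclic φ ∧
  (∃ φL, IsLeftmostConj φL φ ∧ Function.Injective (Fst φL)) ∧
  (∃ φR, IsRightmostConj φR φ ∧ Function.Injective (Lst φR))

end ZDC


open SimpleGraph

lemma conn_card_le {V : Type*} [Fintype V] {G : SimpleGraph V} (hc : G.Connected) :
    Fintype.card V ≤ Nat.card G.edgeSet + 1 := by
  classical
  obtain ⟨root⟩ := hc.nonempty
  have key : ∀ v : V, v ≠ root → ∃ (x : V), G.Adj v x ∧ G.dist x root + 1 = G.dist v root := by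
    intro v hv
    have hd : 0 < G.dist v root := hc.pos_dist_of_ne hv
    obtain ⟨p, hp⟩ := hc.exists_walk_length_eq_dist v root
    have hnil : ¬ p.Nil := by
      rw [SimpleGraph.Walk.not_nil_iff_lt_length]; omega
    refine ⟨p.getVert 1, p.adj_snd hnil, ?_⟩
    have htail := SimpleGraph.dist_le (p.tail)
    have hlen := SimpleGraph.Walk.length_tail_add_one hnil
    have h2 : G.dist v root ≤ G.dist (p.getVert 1) root + 1 := by
      obtain ⟨q, hq⟩ := (hc (p.getVert 1) root).exists_walk_length_eq_dist
      have := SimpleGraph.dist_le (SimpleGraph.Walk.cons (p.adj_snd hnil) q)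
      simpa [hq] using this
    have htail' : G.dist (p.getVert 1) root ≤ p.tail.length := htail
    omega
  choose nxt hadj hdist using key
  have hinj : Function.Injective
      (fun v : {v : V // v ≠ root} => (⟨s(v.1, nxt v.1 v.2), (hadj v.1 v.2)⟩ : G.edgeSet)) := by
    rintro ⟨v, hv⟩ ⟨w, hw⟩ h
    replace h : (v = w ∧ nxt v hv = nxt w hw) ∨ (v = nxt w hw ∧ nxt v hv = w) :=
      Sym2.eq_iff.mp (congrArg Subtype.val h)
    rcases h with ⟨rfl, -⟩ | ⟨h1, h2⟩
    · rfl
    · exfalso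
      have d1 := hdist v hv
      have d2 := hdist w hw
      rw [h2] at d1
      rw [← h1] at d2
      omega
  have hcard : Nat.card {v : V // v ≠ root} ≤ Nat.card G.edgeSet := Nat.card_le_card_of_injective _ hinj
  have h3 : Nat.card {v : V // v ≠ root} = Fintype.card V - 1 := by
    rw [Nat.card_eq_fintype_card]
    simp [Fintype.card_subtype_compl, Fintype.card_subtype_eq]
  have hpos : 1 ≤ Fintype.card V := Fintype.card_pos_iff.2 ⟨root⟩
  omega

lemma isTree_of_conn_card {V : Type*} [Fintype V] {G : SimpleGraph V} (hc : G.Connected)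
    (hcard : Nat.card G.edgeSet + 1 ≤ Fintype.card V) : G.IsTree := by
  classical
  refine ⟨hc, ?_⟩
  by_contra hcyc
  rw [isAcyclic_iff_forall_edge_isBridge] at hcyc
  push_neg at hcyc
  obtain ⟨e, he, hbr⟩ := hcyc
  induction e with
  | _ v w =>
  rw [SimpleGraph.mem_edgeSet] at he
  rw [isBridge_iff] at hbr
  have hreach : (G \ fromEdgeSet {s(v, w)}).Reachable v w := by tauto
  set G' := G \ fromEdgeSet {s(v, w)} with hG'
  have hadj' : ∀ a b : V, G.Adj a b → G'.Reachable a b := by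
    intro a b hab
    by_cases hsab : s(a, b) = s(v, w)
    · rw [Sym2.eq_iff] at hsab
      rcases hsab with ⟨rfl, rfl⟩ | ⟨rfl, rfl⟩
      · exact hreach
      · exact hreach.symm
    · refine SimpleGraph.Adj.reachable ?_
      rw [hG', SimpleGraph.sdiff_adj]
      refine ⟨hab, ?_⟩
      rw [SimpleGraph.fromEdgeSet_adj]
      simp only [Set.mem_singleton_iff]
      tauto
  have hconn' : G'.Connected := by
    haveI : Nonempty V := hc.nonempty
    refine SimpleGraph.Connected.mk (fun a b => ?_)
    obtain ⟨p⟩ := hc a b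
    induction p with
    | nil => exact SimpleGraph.Reachable.refl _
    | cons h p ih => exact (hadj' _ _ h).trans ih
  have hcount := conn_card_le hconn'
  have hE' : G'.edgeSet = G.edgeSet \ {s(v, w)} := by
    rw [hG', edgeSet_sdiff, edgeSet_fromEdgeSet, edgeSet_sdiff_sdiff_isDiag]
  have hmem : s(v, w) ∈ G.edgeSet := he
  have h1 : Nat.card G'.edgeSet = Nat.card G.edgeSet - 1 := by
    rw [Nat.card_coe_set_eq, Nat.card_coe_set_eq, hE',
      Set.ncard_diff_singleton_of_mem hmem]
  have h2 : 1 ≤ Nat.card G.edgeSet := by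
    rw [Nat.card_coe_set_eq]
    have := Set.ncard_pos (s := G.edgeSet) (Set.toFinite _)
    exact this.mpr ⟨_, hmem⟩
  omega
namespace ZDC1
open ZDC

variable {A : Type*}

/-- pointwise occurrence -/
def Occ (u : ℕ → A) (w : List A) (i : ℕ) : Prop := ∀ j (h : j < w.length), w[j] = u (i + j)

/-- windows at `a` and `b` of length `n` coincide -/
def EqW (u : ℕ → A) (a b n : ℕ) : Prop := ∀ j, j < n → u (a + j) = u (b + j)

/-- window at `b` is the reversal of the window at `a` -/
def RevW (u : ℕ → A) (a b n : ℕ) : Prop := ∀ j j', j + j' + 1 = n → u (a + j) = u (b + j')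

/-- the window at `s` of length `ℓ` is a palindrome -/
def Pal (u : ℕ → A) (s ℓ : ℕ) : Prop := RevW u s s ℓ

section basic

variable {u : ℕ → A}

@[simp] lemma factorAt_length (i n : ℕ) : (factorAt u i n).length = n := by
  simp [factorAt]

lemma factorAt_getElem {i n j : ℕ} (h : j < n) :
    (factorAt u i n)[j]'(by simpa using h) = u (i + j) := by
  simp [factorAt]

lemma occursAt_iff {w : List A} {i : ℕ} : OccursAt u w i ↔ Occ u w i := by
  constructor
  · intro h j hj
    calc w[j] = (factorAt u i w.length)[j]'(by simpa using hj) := by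
          exact List.getElem_of_eq h hj
      _ = u (i + j) := factorAt_getElem hj
  · intro h
    apply List.ext_getElem (by simp)
    intro j h1 h2
    rw [h j h1, factorAt_getElem (by simpa using h2)]

lemma occ_factorAt (i n : ℕ) : Occ u (factorAt u i n) i := by
  intro j hj
  exact factorAt_getElem (by simpa using hj)

lemma mem_lang_iff {w : List A} : w ∈ Lang u ↔ ∃ i, Occ u w i := by
  unfold Lang
  simp only [Set.mem_setOf_eq, occursAt_iff]

lemma factorAt_mem_lang (i n : ℕ) : factorAt u i n ∈ Lang u :=
  mem_lang_iff.2 ⟨i, occ_factorAt i n⟩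

lemma occ_factorAt_iff {s ℓ i : ℕ} : Occ u (factorAt u s ℓ) i ↔ EqW u s i ℓ := by
  constructor
  · intro h j hj
    have := h j (by simpa using hj)
    rwa [factorAt_getElem hj] at this
  · intro h j hj
    rw [factorAt_getElem (by simpa using hj)]
    exact h j (by simpa using hj)

lemma eqw_refl (a n : ℕ) : EqW u a a n := fun _ _ => rfl

lemma eqw_symm {a b n : ℕ} (h : EqW u a b n) : EqW u b a n := fun j hj => (h j hj).symm

lemma eqw_trans {a b c n : ℕ} (h : EqW u a b n) (h' : EqW u b c n) : EqW u a c n :=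
  fun j hj => (h j hj).trans (h' j hj)

lemma revw_symm {a b n : ℕ} (h : RevW u a b n) : RevW u b a n :=
  fun j j' hj => (h j' j (by omega)).symm

lemma eqw_revw {a b c n : ℕ} (h : EqW u a b n) (h' : RevW u b c n) : RevW u a c n :=
  fun j j' hj => (h j (by omega)).trans (h' j j' hj)

lemma revw_eqw {a b c n : ℕ} (h : RevW u a b n) (h' : EqW u b c n) : RevW u a c n :=
  fun j j' hj => (h j j' hj).trans (h' j' (by omega))

lemma revw_revw {a b c n : ℕ} (h : RevW u a b n) (h' : RevW u b c n) : EqW u a c n := by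
  intro j hj
  obtain ⟨j', hj'⟩ : ∃ j', j + j' + 1 = n := ⟨n - j - 1, by omega⟩
  exact (h j j' hj').trans (((revw_symm h') j j' hj').symm)

/-- reflection inside a palindromic window -/
lemma reflect {s ℓ t t' m : ℕ} (hp : Pal u s ℓ) (h : t + m + t' = ℓ) :
    RevW u (s + t) (s + t') m := by
  intro j j' hj
  have := hp (t + j) (t' + j') (by omega)
  simpa [add_assoc] using this

lemma pal_sub {s ℓ d m : ℕ} (hp : Pal u s ℓ) (hd : d + m = ℓ) (hm : Pal u s m) :
    Pal u (s + d) m := by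
  intro j j' hj
  have h1 := hp (d + j) j' (by omega)
  have h2 := hm j' j (by omega)
  have h3 := hp j (d + j') (by omega)
  rw [add_assoc, add_assoc]
  exact h1.trans (h2.trans h3)

lemma pal_one (s : ℕ) : Pal u s 1 := by
  intro j j' hj
  have : j = 0 ∧ j' = 0 := by omega
  rw [this.1, this.2]

/-- single-letter reflection in a palindrome -/
lemma pal_letter {s ℓ j j' : ℕ} (hp : Pal u s ℓ) (h : j + j' + 1 = ℓ) :
    u (s + j) = u (s + j') := hp j j' h

lemma reverse_occ_iff {w : List A} {i₀ i : ℕ} (hw : Occ u w i₀) :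
    Occ u w.reverse i ↔ RevW u i₀ i w.length := by
  constructor
  · intro h j j' hjj
    have hj' : j' < w.reverse.length := by simp; omega
    have h1 := h j' hj'
    rw [List.getElem_reverse] at h1
    have h2 := hw (w.length - 1 - j') (by omega)
    rw [h2] at h1
    rw [show w.length - 1 - j' = j from by omega] at h1
    exact h1
  · intro h j hj
    have hj2 : j < w.length := by simpa using hj
    rw [List.getElem_reverse]
    obtain ⟨j', hj'⟩ : ∃ j', j' + j + 1 = w.length := ⟨w.length - j - 1, by omega⟩
    rw [hw (w.length - 1 - j) (by omega)]
    rw [show w.length - 1 - j = j' from by omega]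
    exact h j' j hj'

lemma pal_iff_reverse_self {w : List A} {i₀ : ℕ} (hw : Occ u w i₀) :
    w.reverse = w ↔ Pal u i₀ w.length := by
  constructor
  · intro h
    have : Occ u w.reverse i₀ := by rw [h]; exact hw
    exact (reverse_occ_iff hw).1 this
  · intro h
    have : Occ u w.reverse i₀ := (reverse_occ_iff hw).2 h
    apply List.ext_getElem (by simp)
    intro j h1 h2
    rw [this j h1, hw j h2]

lemma occ_cons {a : A} {w : List A} {p : ℕ} :
    Occ u (a :: w) p ↔ u p = a ∧ Occ u w (p + 1) := by
  constructor
  · intro h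
    refine ⟨by have := (h 0 (by simp)).symm; exact this, fun j hj => ?_⟩
    have := h (j + 1) (by simpa using Nat.succ_lt_succ hj)
    simpa [add_assoc, add_comm 1 j] using this
  · rintro ⟨h0, h⟩ j hj
    cases j with
    | zero => simpa using h0.symm
    | succ j =>
      have := h j (by simpa using Nat.lt_of_succ_lt_succ hj)
      simpa [add_assoc, add_comm 1 j] using this

lemma occ_append_singleton {b : A} {w : List A} {p : ℕ} :
    Occ u (w ++ [b]) p ↔ Occ u w p ∧ u (p + w.length) = b := by
  constructor
  · intro h
    constructor
    · intro j hj
      have := h j (by simp; omega)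
      rwa [List.getElem_append_left hj] at this
    · have := h w.length (by simp)
      rw [List.getElem_append_right (le_refl _)] at this
      simpa using this.symm
  · rintro ⟨h, hb⟩ j hj
    simp only [List.length_append, List.length_singleton] at hj
    rcases Nat.lt_or_ge j w.length with hj' | hj'
    · rw [List.getElem_append_left hj']
      exact h j hj'
    · have hj2 : j = w.length := by omega
      subst hj2
      rw [List.getElem_append_right (le_refl _)]
      simpa using hb.symm

lemma occ_cons_append {a b : A} {w : List A} {p : ℕ} :
    Occ u (a :: (w ++ [b])) p ↔ u p = a ∧ Occ u w (p + 1) ∧ u (p + 1 + w.length) = b := by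
  rw [occ_cons, occ_append_singleton]

lemma reverse_cons_append {a b : A} {w : List A} :
    (a :: (w ++ [b])).reverse = b :: (w.reverse ++ [a]) := by
  simp

end basic

end ZDC1
namespace ZDC1
open ZDC

variable {A : Type*}

section defect

variable {u : ℕ → A}

/-- palindromic factors of the prefix of length `m` -/
def PalSet (u : ℕ → A) (m : ℕ) : Set (List A) :=
  {v | v <:+: factorAt u 0 m ∧ v.reverse = v}

lemma factorAt_append (i a b : ℕ) :
    factorAt u i (a + b) = factorAt u i a ++ factorAt u (i + a) b := by
  apply List.ext_getElem (by simp)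
  intro j h1 h2
  have hab : j < a + b := by simpa using h1
  rcases Nat.lt_or_ge j a with hj | hj
  · rw [List.getElem_append_left (by simpa using hj)]
    rw [factorAt_getElem hab, factorAt_getElem hj]
  · rw [List.getElem_append_right (by simpa using hj)]
    simp only [factorAt_length]
    rw [factorAt_getElem hab, factorAt_getElem (show j - a < b from by omega)]
    congr 1
    omega

lemma palSet_finite (m : ℕ) : (PalSet u m).Finite := by
  classical
  apply Set.Finite.subset ((factorAt u 0 m).sublists.toFinset.finite_toSet)
  intro v hv
  simp only [List.coe_toFinset, Set.mem_setOf_eq, List.mem_sublists]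
  exact hv.1.sublist

lemma infix_iff {v : List A} {m : ℕ} :
    v <:+: factorAt u 0 m ↔ ∃ i, i + v.length ≤ m ∧ Occ u v i := by
  constructor
  · rintro ⟨s, t, hst⟩
    have hlen : s.length + v.length + t.length = m := by
      have := congrArg List.length hst
      simpa [add_assoc] using this
    refine ⟨s.length, by omega, ?_⟩
    intro j hj
    have hj2 : s.length + j < m := by omega
    have hb : s.length + j < (s ++ v ++ t).length := by simp; omega
    have h0 : (s ++ v ++ t)[s.length + j]'hb = u (0 + (s.length + j)) := by
      rw [List.getElem_of_eq hst hb]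
      exact occ_factorAt 0 m (s.length + j) (by simpa using hj2)
    have h1 : (s ++ v ++ t)[s.length + j]'hb = v[j] := by
      rw [List.getElem_append_left (show s.length + j < (s ++ v).length by simp; omega)]
      rw [List.getElem_append_right (show s.length ≤ s.length + j by omega)]
      simp
    rw [← h1, h0]
    simp
  · rintro ⟨i, hile, hocc⟩
    obtain ⟨r, hr⟩ : ∃ r, i + v.length + r = m := ⟨m - i - v.length, by omega⟩
    refine ⟨factorAt u 0 i, factorAt u (i + v.length) r, ?_⟩
    have hv : v = factorAt u i v.length := occursAt_iff.2 hocc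
    rw [← hr, factorAt_append, factorAt_append]
    simp only [Nat.zero_add]
    rw [← hv]

lemma palSet_mono {m : ℕ} : PalSet u m ⊆ PalSet u (m + 1) := by
  rintro v ⟨hv, hpal⟩
  refine ⟨?_, hpal⟩
  rw [infix_iff] at hv ⊢
  obtain ⟨i, h1, h2⟩ := hv
  exact ⟨i, by omega, h2⟩

lemma nil_mem_palSet (m : ℕ) : [] ∈ PalSet u m := ⟨List.nil_infix, rfl⟩

lemma new_pal_unique {m : ℕ} {v v' : List A}
    (hv : v ∈ PalSet u (m + 1)) (hv2 : v ∉ PalSet u m)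
    (hv' : v' ∈ PalSet u (m + 1)) (hv'2 : v' ∉ PalSet u m) : v = v' := by
  obtain ⟨hvi, hvp⟩ := hv
  obtain ⟨hv'i, hv'p⟩ := hv'
  rw [infix_iff] at hvi hv'i
  obtain ⟨i, hi1, hi2⟩ := hvi
  obtain ⟨i', hi'1, hi'2⟩ := hv'i
  have hend : i + v.length = m + 1 := by
    rcases Nat.lt_or_ge (i + v.length) (m + 1) with h | h
    · exact absurd (⟨infix_iff.2 ⟨i, by omega, hi2⟩, hvp⟩ : v ∈ PalSet u m) hv2
    · omega
  have hend' : i' + v'.length = m + 1 := by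
    rcases Nat.lt_or_ge (i' + v'.length) (m + 1) with h | h
    · exact absurd (⟨infix_iff.2 ⟨i', by omega, hi'2⟩, hv'p⟩ : v' ∈ PalSet u m) hv'2
    · omega
  -- wlog shorter vs longer; show words with palindromic suffix relation coincide or give earlier occ
  -- main pointwise claim: if v, v' palindromic, both ending at m+1, |v| ≤ |v'|, then Occ u v i'
  have main : ∀ (x y : List A) (ix iy : ℕ), x.reverse = x → y.reverse = y →
      ix + x.length = m + 1 → iy + y.length = m + 1 → x.length ≤ y.length →
      Occ u x ix → Occ u y iy → Occ u x iy := by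
    intro x y ix iy hx hy hex hey hxy hox hoy
    have hpx : Pal u ix x.length := (pal_iff_reverse_self hox).1 hx
    have hpy : Pal u iy y.length := (pal_iff_reverse_self hoy).1 hy
    intro j hj
    rw [hox j hj]
    -- u (ix + j) = u (iy + j)
    obtain ⟨j', hj'⟩ : ∃ j', j + j' + 1 = x.length := ⟨x.length - j - 1, by omega⟩
    have e1 : u (ix + j) = u (ix + j') := hpx j j' hj'
    -- ix + j' = iy + (y.length - x.length + j')
    obtain ⟨d, hd⟩ : ∃ d, d + x.length = y.length := ⟨y.length - x.length, by omega⟩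
    have hix : ix = iy + d := by omega
    have e2 : u (ix + j') = u (iy + (d + j')) := by rw [hix, add_assoc]
    have e3 : u (iy + (d + j')) = u (iy + j) := hpy (d + j') j (by omega)
    rw [e1, e2, e3]
  rcases Nat.le_total v.length v'.length with hle | hle
  · -- v occurs at i'; if strictly shorter, v occurs with endpoint ≤ m
    rcases Nat.lt_or_ge v.length v'.length with hlt | hge
    · exfalso
      have hocc := main v v' i i' hvp hv'p hend hend' hle hi2 hi'2
      exact hv2 ⟨infix_iff.2 ⟨i', by omega, hocc⟩, hvp⟩
    · -- equal lengths, same position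
      have : i = i' := by omega
      subst this
      apply List.ext_getElem (by omega)
      intro j h1 h2
      rw [hi2 j h1, hi'2 j h2]
  · rcases Nat.lt_or_ge v'.length v.length with hlt | hge
    · exfalso
      have hocc := main v' v i' i hv'p hvp hend' hend hle hi'2 hi2
      exact hv'2 ⟨infix_iff.2 ⟨i, by omega, hocc⟩, hv'p⟩
    · have : i = i' := by omega
      subst this
      apply List.ext_getElem (by omega)
      intro j h1 h2
      rw [hi2 j h1, hi'2 j h2]

lemma ncard_step (m : ℕ) : (PalSet u (m + 1)).ncard ≤ (PalSet u m).ncard + 1 := by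
  by_cases h : PalSet u (m + 1) ⊆ PalSet u m
  · exact le_trans (Set.ncard_le_ncard h (palSet_finite m)) (by omega)
  · rw [Set.not_subset] at h
    obtain ⟨v₀, hv₀, hv₀'⟩ := h
    have hsub : PalSet u (m + 1) ⊆ PalSet u m ∪ {v₀} := by
      intro v hv
      by_cases hv2 : v ∈ PalSet u m
      · exact Or.inl hv2
      · exact Or.inr (new_pal_unique hv hv2 hv₀ hv₀')
    calc (PalSet u (m + 1)).ncard ≤ (PalSet u m ∪ {v₀}).ncard :=
          Set.ncard_le_ncard hsub ((palSet_finite m).union (Set.finite_singleton _))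
      _ ≤ (PalSet u m).ncard + ({v₀} : Set (List A)).ncard := Set.ncard_union_le _ _
      _ = (PalSet u m).ncard + 1 := by rw [Set.ncard_singleton]

open scoped Classical in
lemma filter_ncard_bound (M : ℕ) :
    ((Finset.range M).filter (fun m => PalSet u (m + 1) ⊆ PalSet u m)).card
      + (PalSet u M).ncard ≤ M + 1 := by
  induction M with
  | zero =>
    have hsub : PalSet u 0 ⊆ {[]} := by
      rintro v ⟨hv, -⟩
      have hv' : v <:+: ([] : List A) := by simpa [factorAt] using hv
      simpa using List.infix_nil.mp hv'
    have h1 : (PalSet u 0).ncard ≤ 1 := by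
      have := Set.ncard_le_ncard hsub (Set.finite_singleton _)
      simpa using this
    simpa using h1
  | succ M ih =>
    rw [Finset.range_add_one]
    by_cases h : PalSet u (M + 1) ⊆ PalSet u M
    · rw [Finset.filter_insert, if_pos h, Finset.card_insert_of_notMem (by simp)]
      have := Set.ncard_le_ncard h (palSet_finite M)
      omega
    · rw [Finset.filter_insert, if_neg h]
      have := ncard_step (u := u) M
      omega

end defect

end ZDC1
namespace ZDC1
open ZDC

variable {A : Type*}

section star

variable {u : ℕ → A}

open scoped Classical in
lemma exists_no_new_bound (hfin : Defect u ≠ ⊤) :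
    ∃ B : ℕ, ∀ M : ℕ,
      ((Finset.range M).filter (fun m => PalSet u (m + 1) ⊆ PalSet u m)).card ≤ B := by
  lift Defect u to ℕ using hfin with B hB
  refine ⟨B, fun M => ?_⟩
  have hle : (wordDefect (factorAt u 0 M) : ℕ∞) ≤ Defect u := by
    unfold Defect
    exact le_iSup₂ (f := fun w (_ : w ∈ Lang u) => (wordDefect w : ℕ∞)) (factorAt u 0 M)
      (factorAt_mem_lang 0 M)
  rw [← hB] at hle
  have hle' : wordDefect (factorAt u 0 M) ≤ B := by exact_mod_cast hle
  have hdef : wordDefect (factorAt u 0 M) = M + 1 - (PalSet u M).ncard := by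
    unfold wordDefect palCount
    simp [PalSet]
  have := filter_ncard_bound (u := u) M
  have hone : 1 ≤ (PalSet u M).ncard :=
    (Set.ncard_pos (palSet_finite M)).mpr ⟨[], nil_mem_palSet M⟩
  omega

open scoped Classical in
lemma exists_N0 (hfin : Defect u ≠ ⊤) :
    ∃ N0 : ℕ, ∀ m, N0 ≤ m → ¬ (PalSet u (m + 1) ⊆ PalSet u m) := by
  obtain ⟨B, hB⟩ := exists_no_new_bound (u := u) hfin
  by_contra h
  push_neg at h
  -- for every N there is m ≥ N with no new palindrome
  have hmono : ∀ k : ℕ, ∃ M : ℕ,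
      k ≤ ((Finset.range M).filter (fun m => PalSet u (m + 1) ⊆ PalSet u m)).card := by
    intro k
    induction k with
    | zero => exact ⟨0, by simp⟩
    | succ k ih =>
      obtain ⟨M, hM⟩ := ih
      obtain ⟨m, hm, hsub⟩ := h M
      refine ⟨m + 1, ?_⟩
      have hss : (Finset.range M).filter (fun m => PalSet u (m + 1) ⊆ PalSet u m) ⊂
          (Finset.range (m + 1)).filter (fun m => PalSet u (m + 1) ⊆ PalSet u m) := by
        refine Finset.ssubset_iff_of_subset (Finset.filter_subset_filter _
          (Finset.range_subset_range.2 (by omega))) |>.2 ?_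
        exact ⟨m, by simp [hsub], by simp; omega⟩
      have := Finset.card_lt_card hss
      omega
  obtain ⟨M, hM⟩ := hmono (B + 1)
  exact absurd (hB M) (by omega)

/-- The crucial consequence of finite defect: beyond some point, every prefix has a
unioccurrent palindromic suffix. -/
lemma exists_hstar (hfin : Defect u ≠ ⊤) :
    ∃ N0 : ℕ, ∀ e, N0 + 1 ≤ e →
      ∃ s ℓ, 0 < ℓ ∧ s + ℓ = e ∧ Pal u s ℓ ∧
        (∀ i, EqW u s i ℓ → i + ℓ ≤ e → i = s) := by
  obtain ⟨N0, hN0⟩ := exists_N0 (u := u) hfin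
  refine ⟨N0, fun e he => ?_⟩
  obtain ⟨m, rfl⟩ : ∃ m, e = m + 1 := ⟨e - 1, by omega⟩
  have hm : N0 ≤ m := by omega
  have := hN0 m hm
  rw [Set.not_subset] at this
  obtain ⟨v, hv, hvnot⟩ := this
  obtain ⟨hvi, hvp⟩ := hv
  rw [infix_iff] at hvi
  obtain ⟨s, hs1, hs2⟩ := hvi
  have hend : s + v.length = m + 1 := by
    rcases Nat.lt_or_ge (s + v.length) (m + 1) with hlt | hge
    · exact absurd (⟨infix_iff.2 ⟨s, by omega, hs2⟩, hvp⟩ : v ∈ PalSet u m) hvnot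
    · omega
  have hpos : 0 < v.length := by
    rcases Nat.eq_zero_or_pos v.length with h0 | h0
    · exfalso
      have : v = [] := List.eq_nil_of_length_eq_zero h0
      exact hvnot (this ▸ nil_mem_palSet m)
    · exact h0
  refine ⟨s, v.length, hpos, hend, (pal_iff_reverse_self hs2).1 hvp, ?_⟩
  intro i hi hile
  have hocc : Occ u v i := by
    have hv' : v = factorAt u s v.length := occursAt_iff.2 hs2
    rw [hv']
    rw [occ_factorAt_iff]
    simpa using hi
  rcases Nat.lt_or_ge (i + v.length) (m + 1) with hlt | hge
  · exact absurd (⟨infix_iff.2 ⟨i, by omega, hocc⟩, hvp⟩ : v ∈ PalSet u m) hvnot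
  · omega

end star

end ZDC1
namespace ZDC1
open ZDC

variable {A : Type*}

/-- Hypothesis bundle: `X`/`Y` are the occurrence predicates of a word of length `n`
and of its reversal, in an infinite word `u` which has unioccurrent palindromic
suffixes for all prefixes longer than `N0`. -/
structure Core (u : ℕ → A) (N0 n : ℕ) (X Y : ℕ → Prop) : Prop where
  star : ∀ e, N0 + 1 ≤ e → ∃ s ℓ, 0 < ℓ ∧ s + ℓ = e ∧ Pal u s ℓ ∧
    ∀ i, EqW u s i ℓ → i + ℓ ≤ e → i = s
  hn : N0 + 1 ≤ n
  xx : ∀ i j, X i → X j → EqW u i j n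
  yy : ∀ i j, Y i → Y j → EqW u i j n
  xy : ∀ i j, X i → Y j → RevW u i j n
  rxy : ∀ s ℓ t t', Pal u s ℓ → t + n + t' = ℓ → X (s + t) → Y (s + t')
  ryx : ∀ s ℓ t t', Pal u s ℓ → t + n + t' = ℓ → Y (s + t) → X (s + t')

namespace Core

variable {u : ℕ → A} {N0 n : ℕ} {X Y : ℕ → Prop}

lemma symm (P : Core u N0 n X Y) : Core u N0 n Y X where
  star := P.star
  hn := P.hn
  xx := P.yy
  yy := P.xx
  xy := fun i j hy hx => revw_symm (P.xy j i hx hy)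
  rxy := P.ryx
  ryx := P.rxy

/-- Key step for the alternation lemma: a "bad pair" for `(X, Y)` yields a smaller
bad pair for `(Y, X)`. -/
lemma alt_key (P : Core u N0 n X Y) (hne : ∀ i, ¬ (X i ∧ Y i))
    {i j : ℕ} (hij : i < j) (hXi : X i) (hXj : X j)
    (hnoX : ∀ k, i < k → k < j → ¬ X k) (hnoY : ∀ k, i < k → k < j → ¬ Y k) :
    ∃ t t', t < t' ∧ t' < j ∧ Y t ∧ Y t' ∧
      (∀ k, t < k → k < t' → ¬ Y k) ∧ (∀ k, t < k → k < t' → ¬ X k) := by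
  obtain ⟨s, ℓ, hℓpos, hsl, hpal, huniq⟩ := P.star (j + n) (by have := P.hn; omega)
  rcases le_or_gt ℓ n with hln | hln
  · -- the palindromic suffix is a suffix of the occurrence of `X` at `j`: contradiction
    exfalso
    obtain ⟨t0, ht0⟩ : ∃ t0, t0 + ℓ = n := ⟨n - ℓ, by omega⟩
    have hs : s = j + t0 := by omega
    have heq : EqW u s (i + t0) ℓ := by
      intro r hr
      have h1 : u (s + r) = u (j + (t0 + r)) := by rw [hs, add_assoc]
      have h2 : u (j + (t0 + r)) = u (i + (t0 + r)) := P.xx j i hXj hXi (t0 + r) (by omega)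
      rw [h1, h2, ← add_assoc]
    have := huniq (i + t0) heq (by omega)
    omega
  · obtain ⟨c, hc1, hc⟩ : ∃ c, 1 ≤ c ∧ n + c = ℓ := ⟨ℓ - n, by omega, by omega⟩
    have hj : j = s + c := by omega
    have hYs : Y s := by
      have := P.rxy s ℓ c 0 hpal (by omega) (by rw [← hj]; exact hXj)
      simpa using this
    rcases Nat.lt_trichotomy s i with hsi | hsi | hsi
    · -- s < i
      obtain ⟨d, hd1, hd⟩ : ∃ d, 1 ≤ d ∧ s + d = i := ⟨i - s, by omega, by omega⟩
      obtain ⟨d', hd'⟩ : ∃ d', d + n + d' = ℓ := ⟨ℓ - d - n, by omega⟩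
      have hdc : d + d' = c := by omega
      have hYsd' : Y (s + d') := P.rxy s ℓ d d' hpal (by omega) (by rw [hd]; exact hXi)
      have hd'c : d' < c := by omega
      have hd'pos : 1 ≤ d' := by
        by_contra h0
        have : d' = 0 := by omega
        -- then i = j
        omega
      rcases Nat.lt_trichotomy (s + d') i with h1 | h1 | h1
      · -- genuine smaller bad pair (s, s + d')
        refine ⟨s, s + d', by omega, by omega, hYs, hYsd', ?_, ?_⟩
        · intro k hk1 hk2 hYk
          obtain ⟨g, hg⟩ : ∃ g, s + g = k := ⟨k - s, by omega⟩
          obtain ⟨g', hg'⟩ : ∃ g', g + n + g' = ℓ := ⟨ℓ - g - n, by omega⟩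
          have hXg' : X (s + g') := P.ryx s ℓ g g' hpal hg' (by rw [hg]; exact hYk)
          have : i < s + g' ∧ s + g' < j := by omega
          exact hnoX _ this.1 this.2 hXg'
        · intro k hk1 hk2 hXk
          obtain ⟨g, hg⟩ : ∃ g, s + g = k := ⟨k - s, by omega⟩
          obtain ⟨g', hg'⟩ : ∃ g', g + n + g' = ℓ := ⟨ℓ - g - n, by omega⟩
          have hYg' : Y (s + g') := P.rxy s ℓ g g' hpal hg' (by rw [hg]; exact hXk)
          have : i < s + g' ∧ s + g' < j := by omega
          exact hnoY _ this.1 this.2 hYg'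
      · exact absurd ⟨hXi, h1 ▸ hYsd'⟩ (hne i)
      · exact absurd hYsd' (hnoY _ h1 (by omega))
    · exact absurd ⟨hXi, hsi ▸ hYs⟩ (hne i)
    · exact absurd hYs (hnoY s hsi (by omega))

/-- Occurrences of `X` and `Y` alternate. -/
lemma alternation (P : Core u N0 n X Y) (hne : ∀ i, ¬ (X i ∧ Y i)) :
    ∀ j i, i < j → X i → X j → (∀ k, i < k → k < j → ¬ X k) →
      ∃ k, i < k ∧ k < j ∧ Y k := by
  have main : ∀ j,
      (∀ i, i < j → X i → X j → (∀ k, i < k → k < j → ¬ X k) →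
        (∀ k, i < k → k < j → ¬ Y k) → False) ∧
      (∀ i, i < j → Y i → Y j → (∀ k, i < k → k < j → ¬ Y k) →
        (∀ k, i < k → k < j → ¬ X k) → False) := by
    intro j
    induction j using Nat.strong_induction_on with
    | _ j IH =>
      constructor
      · intro i hij hXi hXj hnoX hnoY
        obtain ⟨t, t', h1, h2, h3, h4, h5, h6⟩ := alt_key P hne hij hXi hXj hnoX hnoY
        exact (IH t' h2).2 t h1 h3 h4 h5 h6
      · intro i hij hYi hYj hnoY hnoX
        obtain ⟨t, t', h1, h2, h3, h4, h5, h6⟩ :=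
          alt_key P.symm (fun k hk => hne k ⟨hk.2, hk.1⟩) hij hYi hYj hnoY hnoX
        exact (IH t' h2).1 t h1 h3 h4 h5 h6
  intro j i hij hXi hXj hnoX
  by_contra h
  push_neg at h
  exact (main j).1 i hij hXi hXj hnoX (fun k hk1 hk2 => h k hk1 hk2)

/-- Complete (mirror) returns are palindromes. -/
lemma mirror (P : Core u N0 n X Y) :
    ∀ i d j, 1 ≤ d → i + d = j → X i → Y j →
      (∀ k, i < k → k < j → ¬ X k ∧ ¬ Y k) → Pal u i (d + n) := by
  have main : ∀ i, ∀ d j, 1 ≤ d → i + d = j → X i → Y j →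
      (∀ k, i < k → k < j → ¬ X k ∧ ¬ Y k) → Pal u i (d + n) := by
    intro i
    induction i using Nat.strong_induction_on with
    | _ i IH =>
      intro d j hd hij hXi hYj hcomp
      obtain ⟨s, ℓ, hℓpos, hsl, hpal, huniq⟩ := P.star (j + n) (by have := P.hn; omega)
      rcases le_or_gt ℓ n with hln | hln
      · exfalso
        obtain ⟨t0, ht0⟩ : ∃ t0, t0 + ℓ = n := ⟨n - ℓ, by omega⟩
        have hs : s = j + t0 := by omega
        have hrev : RevW u i j n := P.xy i j hXi hYj
        have heq : EqW u s i ℓ := by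
          intro r hr
          obtain ⟨r', hr'⟩ : ∃ r', r + r' + 1 = ℓ := ⟨ℓ - r - 1, by omega⟩
          have h1 : u (i + r) = u (j + (t0 + r')) := hrev r (t0 + r') (by omega)
          have h2 : u (s + r) = u (s + r') := hpal r r' hr'
          have h3 : u (s + r') = u (j + (t0 + r')) := by rw [hs, add_assoc]
          rw [h2, h3, h1]
        have := huniq i heq (by omega)
        omega
      · obtain ⟨c, hc1, hc⟩ : ∃ c, 1 ≤ c ∧ n + c = ℓ := ⟨ℓ - n, by omega, by omega⟩
        have hj : j = s + c := by omega
        have hXs : X s := by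
          have := P.ryx s ℓ c 0 hpal (by omega) (by rw [← hj]; exact hYj)
          simpa using this
        rcases Nat.lt_trichotomy s i with hsi | hsi | hsi
        · -- s < i : recurse to the reflected pair (s, s + dd')
          obtain ⟨dd, hdd1, hdd⟩ : ∃ dd, 1 ≤ dd ∧ s + dd = i := ⟨i - s, by omega, by omega⟩
          obtain ⟨dd', hdd'⟩ : ∃ dd', dd + n + dd' = ℓ := ⟨ℓ - dd - n, by omega⟩
          have hddc : dd + dd' = c := by omega
          have hYsdd' : Y (s + dd') := P.rxy s ℓ dd dd' hpal (by omega) (by rw [hdd]; exact hXi)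
          have hdd'pos : 1 ≤ dd' := by omega
          have hdd'i : s + dd' ≤ i := by
            by_contra h1
            push_neg at h1
            have h2 : s + dd' < j := by omega
            exact (hcomp _ h1 h2).2 hYsdd'
          have hcomp' : ∀ k, s < k → k < s + dd' → ¬ X k ∧ ¬ Y k := by
            intro k hk1 hk2
            obtain ⟨g, hg⟩ : ∃ g, s + g = k := ⟨k - s, by omega⟩
            obtain ⟨g', hg'⟩ : ∃ g', g + n + g' = ℓ := ⟨ℓ - g - n, by omega⟩
            constructor
            · intro hXk
              have hYg' : Y (s + g') := P.rxy s ℓ g g' hpal hg' (by rw [hg]; exact hXk)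
              exact (hcomp _ (by omega) (by omega)).2 hYg'
            · intro hYk
              have hXg' : X (s + g') := P.ryx s ℓ g g' hpal hg' (by rw [hg]; exact hYk)
              exact (hcomp _ (by omega) (by omega)).1 hXg'
          have hrec : Pal u s (dd' + n) :=
            IH s (by omega) dd' (s + dd') hdd'pos rfl hXs hYsdd' hcomp'
          have hps : Pal u (s + dd) (dd' + n) :=
            pal_sub hpal (show dd + (dd' + n) = ℓ by omega) hrec
          have hdn : d = dd' := by omega
          rw [hdn, ← hdd]
          exact hps
        · -- s = i : the whole window is the palindrome
          have : ℓ = d + n := by omega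
          rw [← hsi, ← this]
          exact hpal
        · exfalso
          exact (hcomp s hsi (by omega)).1 hXs
  exact main

end Core

end ZDC1
namespace ZDC1
open ZDC

variable {A : Type*}

namespace Core

variable {u : ℕ → A} {N0 n : ℕ} {X Y : ℕ → Prop}

/-- If the extended occurrence `X·b` at `p'+1` is not the first one, then the same
"edge" is realized earlier in mirrored form. -/
lemma slot_key (P : Core u N0 n X Y) {p' t : ℕ} {b : A}
    (hexcl : (∀ i, ¬ (X i ∧ Y i)) ∨ u p' ≠ b)
    (h2 : X (p' + 1)) (hb2 : u (p' + 1 + n) = b)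
    (ht : t < p' + 1) (hXt : X t) (hbt : u (t + n) = b) :
    ∃ s, s < p' ∧ Y (s + 1) ∧ u s = b ∧ u (s + 1 + n) = u p' := by
  obtain ⟨s, ℓ, hℓpos, hsl, hpal, huniq⟩ := P.star (p' + n + 2) (by have := P.hn; omega)
  rcases le_or_gt ℓ (n + 1) with hln | hln
  · exfalso
    obtain ⟨t0, ht0⟩ : ∃ t0, t0 + ℓ = n + 1 := ⟨n + 1 - ℓ, by omega⟩
    have hs : s = p' + 1 + t0 := by omega
    have heq : EqW u s (t + t0) ℓ := by
      intro r hr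
      have h1 : u (s + r) = u (p' + 1 + (t0 + r)) := by rw [hs, add_assoc]
      rcases lt_or_eq_of_le (show t0 + r ≤ n by omega) with hcase | hcase
      · have h2' : u (p' + 1 + (t0 + r)) = u (t + (t0 + r)) :=
          P.xx (p' + 1) t h2 hXt (t0 + r) hcase
        rw [h1, h2', ← add_assoc]
      · have h2' : u (p' + 1 + (t0 + r)) = b := by rw [hcase]; exact hb2
        have h3 : u (t + (t0 + r)) = b := by rw [hcase]; exact hbt
        rw [show t + t0 + r = t + (t0 + r) from by omega, h1, h2', h3]
    have := huniq (t + t0) heq (by omega)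
    omega
  · obtain ⟨t1, ht1a, ht1⟩ : ∃ t1, 1 ≤ t1 ∧ n + 1 + t1 = ℓ := ⟨ℓ - n - 1, by omega, by omega⟩
    have hp' : p' + 1 = s + t1 := by omega
    have hXst1 : X (s + t1) := by rw [← hp']; exact h2
    have hYs1 : Y (s + 1) := P.rxy s ℓ t1 1 hpal (by omega) hXst1
    have hus : u s = b := by
      have h0 := hpal 0 (n + t1) (by omega)
      have : u (s + (n + t1)) = b := by
        rw [show s + (n + t1) = p' + 1 + n by omega]
        exact hb2
      rw [← this, ← h0]
      simp
    rcases eq_or_lt_of_le ht1a with h1 | h1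
    · exfalso
      have hsp' : s = p' := by omega
      rcases hexcl with hne | hub
      · exact hne (p' + 1) ⟨h2, by rw [← hsp']; exact hYs1⟩
      · exact hub (by rw [← hsp']; exact hus)
    · obtain ⟨t2, ht2⟩ : ∃ t2, t2 + 1 = t1 := ⟨t1 - 1, by omega⟩
      refine ⟨s, by omega, hYs1, hus, ?_⟩
      have h0 := hpal (n + 1) t2 (by omega)
      rw [show s + (n + 1) = s + 1 + n by omega] at h0
      rw [h0]
      congr 1
      omega

/-- Variant used for the missing slot: the first occurrence overall is an `X` at `p₀+1`
with left letter `u p₀`, and some `Y`-occurrence has right letter `u p₀`. -/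
lemma slot_key_first (P : Core u N0 n X Y) {p p₀ : ℕ} {b : A}
    (hexcl : (∀ i, ¬ (X i ∧ Y i)) ∨ b ≠ u p₀)
    (hfirst : X (p₀ + 1))
    (hearly : ∀ k, k ≤ p₀ → ¬ X k ∧ ¬ Y k)
    (h2 : Y (p + 1)) (hbp : u p = b) (hap : u (p + 1 + n) = u p₀) :
    ∃ s, s < p ∧ X (s + 1) ∧ u s = u p₀ ∧ u (s + 1 + n) = b := by
  obtain ⟨s, ℓ, hℓpos, hsl, hpal, huniq⟩ := P.star (p + n + 2) (by have := P.hn; omega)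
  have hp₀p : p₀ ≤ p := by
    by_contra h
    exact (hearly (p + 1) (by omega)).2 h2
  rcases le_or_gt ℓ (n + 1) with hln | hln
  · exfalso
    obtain ⟨t0, ht0⟩ : ∃ t0, t0 + ℓ = n + 1 := ⟨n + 1 - ℓ, by omega⟩
    have hs : s = p + 1 + t0 := by omega
    have hrev : RevW u (p₀ + 1) (p + 1) n := P.xy (p₀ + 1) (p + 1) hfirst h2
    have heq : EqW u s p₀ ℓ := by
      intro r hr
      rcases Nat.eq_zero_or_pos r with hr0 | hr0
      · subst hr0
        obtain ⟨r0, hr0'⟩ : ∃ r0, r0 + 1 = ℓ := ⟨ℓ - 1, by omega⟩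
        have h0 := hpal 0 r0 (by omega)
        have : u (s + r0) = u p₀ := by
          rw [show s + r0 = p + 1 + n by omega]
          exact hap
        simp only [Nat.add_zero] at h0 ⊢
        rw [h0, this]
      · obtain ⟨r1, hr1⟩ : ∃ r1, r1 + 1 = r := ⟨r - 1, by omega⟩
        obtain ⟨r', hr'⟩ : ∃ r', r + r' + 1 = ℓ := ⟨ℓ - r - 1, by omega⟩
        have h0 : u (s + r) = u (s + r') := hpal r r' hr'
        have h1 : u (s + r') = u (p + 1 + (t0 + r')) := by rw [hs, add_assoc]
        have h2' : u (p₀ + 1 + r1) = u (p + 1 + (t0 + r')) :=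
          hrev r1 (t0 + r') (by omega)
        rw [h0, h1, ← h2', show p₀ + 1 + r1 = p₀ + r by omega]
    have := huniq p₀ heq (by omega)
    omega
  · obtain ⟨t1, ht1a, ht1⟩ : ∃ t1, 1 ≤ t1 ∧ n + 1 + t1 = ℓ := ⟨ℓ - n - 1, by omega, by omega⟩
    have hp' : p + 1 = s + t1 := by omega
    have hYst1 : Y (s + t1) := by rw [← hp']; exact h2
    have hXs1 : X (s + 1) := P.ryx s ℓ t1 1 hpal (by omega) hYst1
    have hus : u s = u p₀ := by
      have h0 := hpal 0 (n + t1) (by omega)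
      have : u (s + (n + t1)) = u p₀ := by
        rw [show s + (n + t1) = p + 1 + n by omega]
        exact hap
      rw [← this, ← h0]
      simp
    rcases eq_or_lt_of_le ht1a with h1 | h1
    · exfalso
      have hsp : s = p := by omega
      rcases hexcl with hne | hub
      · exact hne (p + 1) ⟨by rw [← hsp]; exact hXs1, h2⟩
      · refine hub ?_
        rw [← hbp, ← hus, hsp]
    · obtain ⟨t2, ht2⟩ : ∃ t2, t2 + 1 = t1 := ⟨t1 - 1, by omega⟩
      refine ⟨s, by omega, hXs1, hus, ?_⟩
      have h0 := hpal (n + 1) t2 (by omega)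
      rw [show s + (n + 1) = s + 1 + n by omega] at h0
      rw [h0, show s + t2 = p by omega, hbp]

end Core

end ZDC1
namespace ZDC1
open ZDC

variable {A : Type*}

section trans

variable {u : ℕ → A} {w : List A} {i₀ : ℕ}

lemma occ_iff_eqw (hocc : Occ u w i₀) {i : ℕ} :
    Occ u w i ↔ EqW u i₀ i w.length := by
  have hwf : w = factorAt u i₀ w.length := occursAt_iff.2 hocc
  constructor
  · intro h
    rw [← occ_factorAt_iff (s := i₀) (ℓ := w.length) (i := i)]
    rw [← hwf]
    exact h
  · intro h
    have := occ_factorAt_iff.2 h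
    rwa [← hwf] at this
  -- note: rw of hwf inside Occ is fine since Occ is a Prop about the list

lemma occ_rev_iff_revw (hocc : Occ u w i₀) {i : ℕ} :
    Occ u w.reverse i ↔ RevW u i₀ i w.length := reverse_occ_iff hocc

lemma em_of_X (hocc : Occ u w i₀) {p : ℕ} (h : EqW u i₀ (p + 1) w.length) :
    u p ∈ Eminus u w := by
  refine mem_lang_iff.2 ⟨p, ?_⟩
  rw [occ_cons]
  exact ⟨rfl, (occ_iff_eqw hocc).2 h⟩

lemma ep_of_X' (hocc : Occ u w i₀) {t : ℕ} (h : EqW u i₀ t w.length) :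
    u (t + w.length) ∈ Eplus u w := by
  refine mem_lang_iff.2 ⟨t, ?_⟩
  rw [occ_append_singleton]
  exact ⟨(occ_iff_eqw hocc).2 h, rfl⟩

lemma em_of_Y' (hclosed : ClosedUnderReversal u) (hocc : Occ u w i₀) {t : ℕ}
    (h : RevW u i₀ t w.length) : u (t + w.length) ∈ Eminus u w := by
  have hx : w.reverse ++ [u (t + w.length)] ∈ Lang u := by
    refine mem_lang_iff.2 ⟨t, ?_⟩
    rw [occ_append_singleton]
    refine ⟨(occ_rev_iff_revw hocc).2 h, by simp⟩
  have := hclosed _ hx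
  simpa [Eminus] using this

lemma ep_of_Y (hclosed : ClosedUnderReversal u) (hocc : Occ u w i₀) {p : ℕ}
    (h : RevW u i₀ (p + 1) w.length) : u p ∈ Eplus u w := by
  have hx : u p :: w.reverse ∈ Lang u := by
    refine mem_lang_iff.2 ⟨p, ?_⟩
    rw [occ_cons]
    exact ⟨rfl, (occ_rev_iff_revw hocc).2 h⟩
  have := hclosed _ hx
  simpa [Eplus] using this

lemma eb_of_X (hocc : Occ u w i₀) {p : ℕ} (h : EqW u i₀ (p + 1) w.length) :
    (u p, u (p + 1 + w.length)) ∈ Eboth u w := by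
  show u p :: (w ++ [u (p + 1 + w.length)]) ∈ Lang u
  refine mem_lang_iff.2 ⟨p, ?_⟩
  rw [occ_cons_append]
  exact ⟨rfl, (occ_iff_eqw hocc).2 h, rfl⟩

lemma eb_of_Y (hclosed : ClosedUnderReversal u) (hocc : Occ u w i₀) {p : ℕ}
    (h : RevW u i₀ (p + 1) w.length) :
    (u (p + 1 + w.length), u p) ∈ Eboth u w := by
  have hx : u p :: (w.reverse ++ [u (p + 1 + w.length)]) ∈ Lang u := by
    refine mem_lang_iff.2 ⟨p, ?_⟩
    rw [occ_cons_append]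
    exact ⟨rfl, (occ_rev_iff_revw hocc).2 h, by simp⟩
  have := hclosed _ hx
  rw [reverse_cons_append] at this
  show u (p + 1 + w.length) :: (w ++ [u p]) ∈ Lang u
  simpa using this

lemma em_realize (hocc : Occ u w i₀) {a : A} (ha : a ∈ Eminus u w) :
    ∃ p, EqW u i₀ (p + 1) w.length ∧ u p = a := by
  obtain ⟨p, hp⟩ := mem_lang_iff.1 ha
  rw [occ_cons] at hp
  exact ⟨p, (occ_iff_eqw hocc).1 hp.2, hp.1⟩

lemma ep_realize (hclosed : ClosedUnderReversal u) (hocc : Occ u w i₀) {b : A}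
    (hb : b ∈ Eplus u w) :
    ∃ p, RevW u i₀ (p + 1) w.length ∧ u p = b := by
  have := hclosed _ hb
  rw [show (w ++ [b]).reverse = b :: w.reverse by simp] at this
  obtain ⟨p, hp⟩ := mem_lang_iff.1 this
  rw [occ_cons] at hp
  exact ⟨p, (occ_rev_iff_revw hocc).1 hp.2, hp.1⟩

lemma eb_realize (hocc : Occ u w i₀) {a b : A} (hab : (a, b) ∈ Eboth u w) :
    ∃ p, EqW u i₀ (p + 1) w.length ∧ u p = a ∧ u (p + 1 + w.length) = b := by
  obtain ⟨p, hp⟩ := mem_lang_iff.1 hab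
  rw [occ_cons_append] at hp
  exact ⟨p, (occ_iff_eqw hocc).1 hp.2.1, hp.1, hp.2.2⟩

lemma em_nonempty (hclosed : ClosedUnderReversal u) (hocc : Occ u w i₀) :
    (Eminus u w).Nonempty := by
  have hrev : w.reverse ∈ Lang u := hclosed _ (mem_lang_iff.2 ⟨i₀, hocc⟩)
  obtain ⟨t, ht⟩ := mem_lang_iff.1 hrev
  exact ⟨u (t + w.length), em_of_Y' hclosed hocc ((occ_rev_iff_revw hocc).1 ht)⟩

end trans

end ZDC1
namespace ZDC1
open ZDC

variable {A : Type*}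

open scoped Classical in
lemma gamma_tree_abstract [Fintype A] {u : ℕ → A} {N0 n : ℕ} {X Y : ℕ → Prop}
    (P : Core u N0 n X Y) (hne : ∀ i, ¬ (X i ∧ Y i)) {w : List A}
    (hEb : ∀ a b, (a, b) ∈ Eboth u w ↔ ∃ p,
      (X (p + 1) ∧ u p = a ∧ u (p + 1 + n) = b) ∨
      (Y (p + 1) ∧ u p = b ∧ u (p + 1 + n) = a))
    (hEmX : ∀ a, a ∈ Eminus u w → ∃ p, X (p + 1) ∧ u p = a)
    (hEpY : ∀ b, b ∈ Eplus u w → ∃ p, Y (p + 1) ∧ u p = b)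
    (hEmP : ∀ p, X (p + 1) → u p ∈ Eminus u w)
    (hEpP : ∀ p, Y (p + 1) → u p ∈ Eplus u w)
    (hEmT : ∀ t, Y t → u (t + n) ∈ Eminus u w)
    (hEpT : ∀ t, X t → u (t + n) ∈ Eplus u w)
    (hEmne : (Eminus u w).Nonempty) :
    (GammaGraph u w).IsTree := by
  obtain ⟨a₀, ha₀⟩ := hEmne
  set Em := Eminus u w
  set Ep := Eplus u w
  set Eb := Eboth u w
  set G := GammaGraph u w with hG
  -- the realization predicate for an edge (a, b)
  set Rl : A → A → ℕ → Prop := fun a b p =>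
    (X (p + 1) ∧ u p = a ∧ u (p + 1 + n) = b) ∨
    (Y (p + 1) ∧ u p = b ∧ u (p + 1 + n) = a) with hRl
  have hRlX : ∀ {a b p}, Rl a b p → X (p + 1) → u p = a ∧ u (p + 1 + n) = b := by
    rintro a b p (⟨_, h2, h3⟩ | ⟨h1, h2, h3⟩) hX
    · exact ⟨h2, h3⟩
    · exact absurd ⟨hX, h1⟩ (hne (p + 1))
  have hRlY : ∀ {a b p}, Rl a b p → ¬ X (p + 1) → Y (p + 1) ∧ u p = b ∧ u (p + 1 + n) = a := by
    rintro a b p (⟨h1, h2, h3⟩ | ⟨h1, h2, h3⟩) hX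
    · exact absurd h1 hX
    · exact ⟨h1, h2, h3⟩
  -- the slot map
  set σ : A × A → A ⊕ A := fun e =>
    if h : ∃ p, Rl e.1 e.2 p then
      (if X (Nat.find h + 1) then Sum.inr e.2 else Sum.inl e.1)
    else Sum.inl e.1 with hσ
  -- key facts toward injectivity
  have keyX : ∀ a b a' (p p' : ℕ), Rl a b p → Rl a' b p' → X (p + 1) → X (p' + 1) →
      p < p' → ∃ s, s < p' ∧ Rl a' b s := by
    intro a b a' p p' h1 h2 hX1 hX2 hpp
    obtain ⟨ha1, hb1⟩ := hRlX h1 hX1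
    obtain ⟨ha2, hb2⟩ := hRlX h2 hX2
    obtain ⟨s, hs, hYs, hus, husn⟩ :=
      P.slot_key (Or.inl hne) hX2 hb2 (show p + 1 < p' + 1 by omega) hX1 hb1
    exact ⟨s, hs, Or.inr ⟨hYs, hus, by rw [husn, ha2]⟩⟩
  have keyY : ∀ a b b' (p p' : ℕ), Rl a b p → Rl a b' p' → ¬ X (p + 1) → ¬ X (p' + 1) →
      p < p' → ∃ s, s < p' ∧ Rl a b' s := by
    intro a b b' p p' h1 h2 hX1 hX2 hpp
    obtain ⟨hY1, hb1, ha1⟩ := hRlY h1 hX1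
    obtain ⟨hY2, hb2, ha2⟩ := hRlY h2 hX2
    obtain ⟨s, hs, hXs, hus, husn⟩ :=
      P.symm.slot_key (Or.inl (fun i hi => hne i ⟨hi.2, hi.1⟩)) hY2 ha2
        (show p + 1 < p' + 1 by omega) hY1 ha1
    exact ⟨s, hs, Or.inl ⟨hXs, hus, by rw [husn, hb2]⟩⟩
  -- injectivity of the slot map on Eb
  have hinj : Set.InjOn σ Eb := by
    rintro ⟨a, b⟩ hab ⟨a', b'⟩ hab' heq
    have hex : ∃ p, Rl a b p := (hEb a b).1 hab
    have hex' : ∃ p, Rl a' b' p := (hEb a' b').1 hab'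
    rw [hσ] at heq
    simp only [dif_pos hex, dif_pos hex'] at heq
    by_cases hX1 : X (Nat.find hex + 1) <;> by_cases hX2 : X (Nat.find hex' + 1)
    · rw [if_pos hX1, if_pos hX2] at heq
      have hbb : b = b' := by simpa using heq
      subst hbb
      rcases Nat.lt_trichotomy (Nat.find hex) (Nat.find hex') with h | h | h
      · obtain ⟨s, hs, hRs⟩ := keyX a b a' _ _ (Nat.find_spec hex) (Nat.find_spec hex') hX1 hX2 h
        exact absurd hRs (Nat.find_min hex' hs)
      · have e1 := hRlX (Nat.find_spec hex) hX1
        have e2 := hRlX (Nat.find_spec hex') hX2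
        rw [h] at e1
        have : a = a' := e1.1.symm.trans e2.1
        simp [this]
      · obtain ⟨s, hs, hRs⟩ := keyX a' b a _ _ (Nat.find_spec hex') (Nat.find_spec hex) hX2 hX1 h
        exact absurd hRs (Nat.find_min hex hs)
    · rw [if_pos hX1, if_neg hX2] at heq
      exact absurd heq (by simp)
    · rw [if_neg hX1, if_pos hX2] at heq
      exact absurd heq (by simp)
    · rw [if_neg hX1, if_neg hX2] at heq
      have haa : a = a' := by simpa using heq
      subst haa
      rcases Nat.lt_trichotomy (Nat.find hex) (Nat.find hex') with h | h | h
      · obtain ⟨s, hs, hRs⟩ := keyY a b b' _ _ (Nat.find_spec hex) (Nat.find_spec hex') hX1 hX2 h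
        exact absurd hRs (Nat.find_min hex' hs)
      · have e1 := hRlY (Nat.find_spec hex) hX1
        have e2 := hRlY (Nat.find_spec hex') hX2
        rw [h] at e1
        have : b = b' := e1.2.1.symm.trans e2.2.1
        simp [this]
      · obtain ⟨s, hs, hRs⟩ := keyY a b' b _ _ (Nat.find_spec hex') (Nat.find_spec hex) hX2 hX1 h
        exact absurd hRs (Nat.find_min hex hs)
  -- image of the slot map
  have himg : ∀ e ∈ Eb, σ e ∈ (Sum.inl '' Em ∪ Sum.inr '' Ep : Set (A ⊕ A)) := by
    rintro ⟨a, b⟩ hab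
    have hex : ∃ p, Rl a b p := (hEb a b).1 hab
    rw [hσ]
    simp only [dif_pos hex]
    by_cases hX1 : X (Nat.find hex + 1)
    · rw [if_pos hX1]
      obtain ⟨-, hb⟩ := hRlX (Nat.find_spec hex) hX1
      exact Or.inr ⟨b, by rw [← hb]; exact hEpT _ hX1, rfl⟩
    · rw [if_neg hX1]
      obtain ⟨hY, -, ha⟩ := hRlY (Nat.find_spec hex) hX1
      exact Or.inl ⟨a, by rw [← ha]; exact hEmT _ hY, rfl⟩
  -- a vertex missed by the slot map
  have hmiss : ∃ v₀ ∈ (Sum.inl '' Em ∪ Sum.inr '' Ep : Set (A ⊕ A)), ∀ e ∈ Eb, σ e ≠ v₀ := by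
    by_cases hX0 : X 0
    · refine ⟨Sum.inr (u n), Or.inr ⟨u n, by simpa using hEpT 0 hX0, rfl⟩, ?_⟩
      rintro ⟨a, b⟩ hab heq
      have hex : ∃ p, Rl a b p := (hEb a b).1 hab
      rw [hσ] at heq
      simp only [dif_pos hex] at heq
      by_cases hX1 : X (Nat.find hex + 1)
      · rw [if_pos hX1] at heq
        have hbn : b = u n := by simpa using heq
        obtain ⟨ha, hb⟩ := hRlX (Nat.find_spec hex) hX1
        obtain ⟨s, hs, hYs, hus, husn⟩ :=
          P.slot_key (Or.inl hne) hX1 hb (Nat.succ_pos _) hX0 (by rw [hbn]; simp)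
        exact Nat.find_min hex hs (Or.inr ⟨hYs, hus, by rw [husn, ha]⟩)
      · rw [if_neg hX1] at heq
        exact absurd heq (by simp)
    · by_cases hY0 : Y 0
      · refine ⟨Sum.inl (u n), Or.inl ⟨u n, by simpa using hEmT 0 hY0, rfl⟩, ?_⟩
        rintro ⟨a, b⟩ hab heq
        have hex : ∃ p, Rl a b p := (hEb a b).1 hab
        rw [hσ] at heq
        simp only [dif_pos hex] at heq
        by_cases hX1 : X (Nat.find hex + 1)
        · rw [if_pos hX1] at heq
          exact absurd heq (by simp)
        · rw [if_neg hX1] at heq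
          have han : a = u n := by simpa using heq
          obtain ⟨hY1, hb, ha⟩ := hRlY (Nat.find_spec hex) hX1
          obtain ⟨s, hs, hXs, hus, husn⟩ :=
            P.symm.slot_key (Or.inl (fun i hi => hne i ⟨hi.2, hi.1⟩)) hY1
              (by rw [ha, han]) (Nat.succ_pos _) hY0 (by simp)
          exact Nat.find_min hex hs (Or.inl ⟨hXs, by rw [hus, ← han], by rw [husn, hb]⟩)
      · -- first occurrence at p₀ + 1
        have hfex : ∃ k, X k ∨ Y k := by
          obtain ⟨p, hp, -⟩ := hEmX a₀ ha₀
          exact ⟨p + 1, Or.inl hp⟩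
        have hfpos : 0 < Nat.find hfex := by
          rcases Nat.eq_zero_or_pos (Nat.find hfex) with h | h
          · have := Nat.find_spec hfex
            rw [h] at this
            rcases this with h' | h'
            · exact absurd h' hX0
            · exact absurd h' hY0
          · exact h
        obtain ⟨p₀, hp₀⟩ : ∃ p₀, p₀ + 1 = Nat.find hfex := ⟨Nat.find hfex - 1, by omega⟩
        have hearly : ∀ k, k ≤ p₀ → ¬ X k ∧ ¬ Y k := by
          intro k hk
          have := Nat.find_min hfex (show k < Nat.find hfex by omega)
          tauto
        rcases Nat.find_spec hfex with hfX | hfY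
        · rw [← hp₀] at hfX
          refine ⟨Sum.inl (u p₀), Or.inl ⟨u p₀, hEmP p₀ hfX, rfl⟩, ?_⟩
          rintro ⟨a, b⟩ hab heq
          have hex : ∃ p, Rl a b p := (hEb a b).1 hab
          rw [hσ] at heq
          simp only [dif_pos hex] at heq
          by_cases hX1 : X (Nat.find hex + 1)
          · rw [if_pos hX1] at heq
            exact absurd heq (by simp)
          · rw [if_neg hX1] at heq
            have han : a = u p₀ := by simpa using heq
            obtain ⟨hY1, hb, ha⟩ := hRlY (Nat.find_spec hex) hX1
            obtain ⟨s, hs, hXs, hus, husn⟩ :=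
              P.slot_key_first (Or.inl hne) hfX hearly hY1 hb (by rw [ha, han])
            exact Nat.find_min hex hs (Or.inl ⟨hXs, by rw [hus, ← han], by rw [husn]⟩)
        · rw [← hp₀] at hfY
          refine ⟨Sum.inr (u p₀), Or.inr ⟨u p₀, hEpP p₀ hfY, rfl⟩, ?_⟩
          rintro ⟨a, b⟩ hab heq
          have hex : ∃ p, Rl a b p := (hEb a b).1 hab
          rw [hσ] at heq
          simp only [dif_pos hex] at heq
          by_cases hX1 : X (Nat.find hex + 1)
          · rw [if_pos hX1] at heq
            have hbn : b = u p₀ := by simpa using heq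
            obtain ⟨ha, hb⟩ := hRlX (Nat.find_spec hex) hX1
            obtain ⟨s, hs, hYs, hus, husn⟩ :=
              P.symm.slot_key_first (Or.inl (fun i hi => hne i ⟨hi.2, hi.1⟩)) hfY
                (fun k hk => ⟨(hearly k hk).2, (hearly k hk).1⟩) hX1 ha (by rw [hb, hbn])
            exact Nat.find_min hex hs (Or.inr ⟨hYs, by rw [hus, ← hbn], by rw [husn]⟩)
          · rw [if_neg hX1] at heq
            exact absurd heq (by simp)
  -- the cardinality bound
  have hcard : Eb.ncard + 1 ≤ Em.ncard + Ep.ncard := by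
    obtain ⟨v₀, hv₀T, hv₀⟩ := hmiss
    have himg' : σ '' Eb ⊆ (Sum.inl '' Em ∪ Sum.inr '' Ep) \ {v₀} := by
      rintro x ⟨e, he, rfl⟩
      exact ⟨himg e he, by simpa using hv₀ e he⟩
    have h1 : Eb.ncard ≤ ((Sum.inl '' Em ∪ Sum.inr '' Ep : Set (A ⊕ A)) \ {v₀}).ncard := by
      exact Set.ncard_le_ncard_of_injOn σ (fun e he => himg' ⟨e, he, rfl⟩) hinj
        (Set.toFinite _)
    have h2 : ((Sum.inl '' Em ∪ Sum.inr '' Ep : Set (A ⊕ A)) \ {v₀}).ncard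
        = (Sum.inl '' Em ∪ Sum.inr '' Ep : Set (A ⊕ A)).ncard - 1 :=
      Set.ncard_diff_singleton_of_mem hv₀T
    have h3 : (Sum.inl '' Em ∪ Sum.inr '' Ep : Set (A ⊕ A)).ncard = Em.ncard + Ep.ncard := by
      rw [Set.ncard_union_eq (by simp [Set.disjoint_left]) (Set.toFinite _) (Set.toFinite _)]
      rw [Set.ncard_image_of_injective _ Sum.inl_injective,
        Set.ncard_image_of_injective _ Sum.inr_injective]
    have h4 : 1 ≤ (Sum.inl '' Em ∪ Sum.inr '' Ep : Set (A ⊕ A)).ncard := by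
      exact (Set.ncard_pos (Set.toFinite _)).2 ⟨v₀, hv₀T⟩
    omega
  -- relate the edge set of G to Eb
  set f : Sym2 (↥(Eminus u w) ⊕ ↥(Eplus u w)) → A × A := Sym2.lift ⟨fun x y =>
      match x, y with
      | Sum.inl a, Sum.inr b => ((a : A), (b : A))
      | Sum.inr b, Sum.inl a => ((a : A), (b : A))
      | _, _ => (a₀, a₀), by rintro (a | b) (a' | b') <;> rfl⟩ with hf
  have hedge_form : ∀ e ∈ G.edgeSet, ∃ (a : A) (ha : a ∈ Em) (b : A) (hb : b ∈ Ep),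
      e = s(Sum.inl ⟨a, ha⟩, Sum.inr ⟨b, hb⟩) ∧ (a, b) ∈ Eb := by
    intro e he
    induction e with
    | _ x y =>
      rw [SimpleGraph.mem_edgeSet, hG, GammaGraph, SimpleGraph.fromRel_adj] at he
      obtain ⟨hxy, h | h⟩ := he
      · obtain ⟨a, b, rfl, rfl, hab⟩ := h
        exact ⟨a.1, a.2, b.1, b.2, rfl, hab⟩
      · obtain ⟨a, b, rfl, rfl, hab⟩ := h
        exact ⟨a.1, a.2, b.1, b.2, Sym2.eq_swap, hab⟩
  have hfval : ∀ (a : A) (ha : a ∈ Em) (b : A) (hb : b ∈ Ep),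
      f s(Sum.inl ⟨a, ha⟩, Sum.inr ⟨b, hb⟩) = (a, b) := fun a ha b hb => rfl
  have hedge_card : (G.edgeSet : Set (Sym2 (↥(Eminus u w) ⊕ ↥(Eplus u w)))).ncard ≤ Eb.ncard := by
    refine Set.ncard_le_ncard_of_injOn f ?_ ?_ (Set.toFinite _)
    · intro e he
      obtain ⟨a, ha, b, hb, rfl, hab⟩ := hedge_form e he
      rw [hfval]
      exact hab
    · intro e he e' he' heq
      obtain ⟨a, ha, b, hb, rfl, -⟩ := hedge_form e he
      obtain ⟨a', ha', b', hb', rfl, -⟩ := hedge_form e' he'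
      rw [hfval, hfval, Prod.mk.injEq] at heq
      obtain ⟨rfl, rfl⟩ := heq
      rfl
  -- connectivity
  haveI hnonempty : Nonempty (↥(Eminus u w) ⊕ ↥(Eplus u w)) := ⟨Sum.inl ⟨a₀, ha₀⟩⟩
  set vert : ℕ → (↥(Eminus u w) ⊕ ↥(Eplus u w)) := fun p =>
    if h : X (p + 1) then Sum.inl ⟨u p, hEmP p h⟩
    else if h' : Y (p + 1) then Sum.inr ⟨u p, hEpP p h'⟩
    else Sum.inl ⟨a₀, ha₀⟩ with hvert
  have vertX : ∀ p (h : X (p + 1)), vert p = Sum.inl ⟨u p, hEmP p h⟩ := by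
    intro p h
    rw [hvert]
    simp only [dif_pos h]
  have vertY : ∀ p (h : Y (p + 1)), vert p = Sum.inr ⟨u p, hEpP p h⟩ := by
    intro p h
    have hx : ¬ X (p + 1) := fun hx => hne _ ⟨hx, h⟩
    rw [hvert]
    simp only [dif_neg hx, dif_pos h]
  have hadj : ∀ x y (a : A) (ha : a ∈ Em) (b : A) (hb : b ∈ Ep),
      x = Sum.inl ⟨a, ha⟩ → y = Sum.inr ⟨b, hb⟩ → (a, b) ∈ Eb → G.Adj x y := by
    intro x y a ha b hb hx hy hab
    rw [hG, GammaGraph, SimpleGraph.fromRel_adj]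
    subst hx hy
    exact ⟨by simp, Or.inl ⟨⟨a, ha⟩, ⟨b, hb⟩, rfl, rfl, hab⟩⟩
  have reach : ∀ d p q, p + d = q → (X (p + 1) ∨ Y (p + 1)) → (X (q + 1) ∨ Y (q + 1)) →
      G.Reachable (vert p) (vert q) := by
    intro d
    induction d using Nat.strong_induction_on with
    | _ d IH =>
      intro p q hpq hp hq
      rcases Nat.eq_zero_or_pos d with rfl | hd
      · have : p = q := by omega
        subst this
        exact SimpleGraph.Reachable.refl _
      by_cases hmid : ∃ k, p < k ∧ k < q ∧ (X (k + 1) ∨ Y (k + 1))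
      · obtain ⟨k, hk1, hk2, hk3⟩ := hmid
        exact (IH (k - p) (by omega) p k (by omega) hp hk3).trans
          (IH (q - k) (by omega) k q (by omega) hk3 hq)
      · push_neg at hmid
        have hcomp : ∀ k, p + 1 < k → k < q + 1 → ¬ X k ∧ ¬ Y k := by
          intro k h1 h2
          obtain ⟨k', rfl⟩ : ∃ k', k = k' + 1 := ⟨k - 1, by omega⟩
          have := hmid k' (by omega) (by omega)
          tauto
        rcases hp with hpX | hpY <;> rcases hq with hqX | hqY
        · exfalso
          obtain ⟨k, hk1, hk2, hkY⟩ := P.alternation hne (q + 1) (p + 1) (by omega) hpX hqX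
            (fun k h1 h2 => (hcomp k h1 h2).1)
          exact (hcomp k hk1 hk2).2 hkY
        · -- X then Y : mirror return gives an edge
          have hpal := P.mirror (p + 1) d (q + 1) hd (by omega) hpX hqY hcomp
          have hedge : u (p + 1 + n) = u q := by
            obtain ⟨d1, hd1⟩ : ∃ d1, d1 + 1 = d := ⟨d - 1, by omega⟩
            have := hpal n d1 (by omega)
            rwa [show p + 1 + d1 = q from by omega] at this
          have hEbm : (u p, u q) ∈ Eb := (hEb _ _).2 ⟨p, Or.inl ⟨hpX, rfl, hedge⟩⟩
          refine SimpleGraph.Adj.reachable ?_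
          rw [vertX p hpX, vertY q hqY]
          exact hadj _ _ (u p) (hEmP p hpX) (u q) (hEpP q hqY) rfl rfl hEbm
        · -- Y then X
          have hpal := P.symm.mirror (p + 1) d (q + 1) hd (by omega) hpY hqX
            (fun k h1 h2 => ⟨(hcomp k h1 h2).2, (hcomp k h1 h2).1⟩)
          have hedge : u (p + 1 + n) = u q := by
            obtain ⟨d1, hd1⟩ : ∃ d1, d1 + 1 = d := ⟨d - 1, by omega⟩
            have := hpal n d1 (by omega)
            rwa [show p + 1 + d1 = q from by omega] at this
          have hEbm : (u q, u p) ∈ Eb := (hEb _ _).2 ⟨p, Or.inr ⟨hpY, rfl, hedge⟩⟩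
          refine (SimpleGraph.Adj.reachable ?_).symm
          rw [vertX q hqX, vertY p hpY]
          exact hadj _ _ (u q) (hEmP q hqX) (u p) (hEpP p hpY) rfl rfl hEbm
        · exfalso
          obtain ⟨k, hk1, hk2, hkX⟩ := P.symm.alternation (fun i hi => hne i ⟨hi.2, hi.1⟩)
            (q + 1) (p + 1) (by omega) hpY hqY (fun k h1 h2 => (hcomp k h1 h2).2)
          exact (hcomp k hk1 hk2).1 hkX
  have hconn : G.Connected := by
    refine SimpleGraph.Connected.mk ?_
    have hreal : ∀ z : (↥(Eminus u w) ⊕ ↥(Eplus u w)), ∃ p, (X (p + 1) ∨ Y (p + 1)) ∧ vert p = z := by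
      rintro (⟨a, ha⟩ | ⟨b, hb⟩)
      · obtain ⟨p, hp, hpa⟩ := hEmX a ha
        exact ⟨p, Or.inl hp, by rw [vertX p hp]; exact congrArg Sum.inl (Subtype.ext hpa)⟩
      · obtain ⟨p, hp, hpb⟩ := hEpY b hb
        exact ⟨p, Or.inr hp, by rw [vertY p hp]; exact congrArg Sum.inr (Subtype.ext hpb)⟩
    intro x y
    obtain ⟨px, hpx, hvx⟩ := hreal x
    obtain ⟨py, hpy, hvy⟩ := hreal y
    rw [← hvx, ← hvy]
    rcases le_total px py with h | h
    · exact reach (py - px) px py (by omega) hpx hpy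
    · exact (reach (px - py) py px (by omega) hpy hpx).symm
  -- assemble
  refine isTree_of_conn_card hconn ?_
  have e1 : Nat.card G.edgeSet = (G.edgeSet : Set (Sym2 (↥(Eminus u w) ⊕ ↥(Eplus u w)))).ncard :=
    Nat.card_coe_set_eq _
  have e2 : Fintype.card (↥(Eminus u w) ⊕ ↥(Eplus u w)) = Em.ncard + Ep.ncard := by
    rw [Fintype.card_sum, ← Nat.card_eq_fintype_card, ← Nat.card_eq_fintype_card,
      Nat.card_coe_set_eq, Nat.card_coe_set_eq]
  omega

end ZDC1
namespace ZDC1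
open ZDC

variable {A : Type*}

lemma find_congr' {p q : ℕ → Prop} [DecidablePred p] [DecidablePred q]
    (h : ∀ n, p n ↔ q n) (hp : ∃ n, p n) (hq : ∃ n, q n) : Nat.find hp = Nat.find hq :=
  le_antisymm (Nat.find_mono fun n hn => (h n).2 hn) (Nat.find_mono fun n hn => (h n).1 hn)

open scoped Classical in
lemma theta_tree_abstract [Fintype A] {u : ℕ → A} {N0 n : ℕ} {X : ℕ → Prop}
    (P : Core u N0 n X X) {w : List A}
    (hEb : ∀ a b, (a, b) ∈ Eboth u w ↔ ∃ p, X (p + 1) ∧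
      ((u p = a ∧ u (p + 1 + n) = b) ∨ (u p = b ∧ u (p + 1 + n) = a)))
    (hEmX : ∀ a, a ∈ Eminus u w → ∃ p, X (p + 1) ∧ u p = a)
    (hEmP : ∀ p, X (p + 1) → u p ∈ Eminus u w)
    (hEmT : ∀ t, X t → u (t + n) ∈ Eminus u w)
    (hEmne : (Eminus u w).Nonempty) :
    (ThetaGraph u w).IsTree := by
  obtain ⟨a₀, ha₀⟩ := hEmne
  set Em := Eminus u w
  set Eb := Eboth u w
  set G := ThetaGraph u w with hG
  set Rl : A → A → ℕ → Prop := fun a b p => X (p + 1) ∧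
    ((u p = a ∧ u (p + 1 + n) = b) ∨ (u p = b ∧ u (p + 1 + n) = a)) with hRl
  have hRlswap : ∀ {a b p}, Rl a b p → Rl b a p := by
    rintro a b p ⟨h1, h2 | h2⟩
    · exact ⟨h1, Or.inr h2⟩
    · exact ⟨h1, Or.inl h2⟩
  have hRlex : ∀ {a b p}, Rl a b p ↔ Rl b a p := fun {a b p} => ⟨hRlswap, hRlswap⟩
  -- the slot function on unordered pairs
  set F : ↥Em → ↥Em → A := fun x y =>
    if h : ∃ p, Rl (x : A) (y : A) p then u (Nat.find h + 1 + n) else a₀ with hF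
  have hFsymm : ∀ x y, F x y = F y x := by
    intro x y
    rw [hF]
    by_cases h : ∃ p, Rl (x : A) (y : A) p
    · have h' : ∃ p, Rl (y : A) (x : A) p := by
        obtain ⟨p, hp⟩ := h
        exact ⟨p, hRlswap hp⟩
      simp only [dif_pos h, dif_pos h']
      rw [find_congr' (fun m => hRlex) h h']
    · have h' : ¬ ∃ p, Rl (y : A) (x : A) p := by
        intro hc
        obtain ⟨p, hp⟩ := hc
        exact h ⟨p, hRlswap hp⟩
      simp only [dif_neg h, dif_neg h']
  set σ : Sym2 (↥Em) → A := Sym2.lift ⟨F, hFsymm⟩ with hσ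
  -- adjacency characterization
  have hadj_iff : ∀ x y : ↥Em, G.Adj x y ↔ x ≠ y ∧ ∃ p, Rl (x : A) (y : A) p := by
    intro x y
    rw [hG, ThetaGraph, SimpleGraph.fromRel_adj]
    constructor
    · rintro ⟨hxy, h | h⟩
      · obtain ⟨p, hp⟩ := (hEb _ _).1 h
        exact ⟨hxy, p, hp⟩
      · obtain ⟨p, hp⟩ := (hEb _ _).1 h
        exact ⟨hxy, p, hRlswap hp⟩
    · rintro ⟨hxy, p, hp⟩
      exact ⟨hxy, Or.inl ((hEb _ _).2 ⟨p, hp⟩)⟩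
  -- facts about the minimal realization
  have hslot : ∀ (a b : A), a ≠ b → (hex : ∃ p, Rl a b p) →
      (u (Nat.find hex) = a ∧ u (Nat.find hex + 1 + n) = b) ∨
      (u (Nat.find hex) = b ∧ u (Nat.find hex + 1 + n) = a) :=
    fun a b hab hex => (Nat.find_spec hex).2
  -- main injectivity ingredient
  have keyT : ∀ (a b a' b' : A) (hex : ∃ p, Rl a b p) (hex' : ∃ p, Rl a' b' p),
      a ≠ b → a' ≠ b' →
      u (Nat.find hex + 1 + n) = u (Nat.find hex' + 1 + n) →
      Nat.find hex < Nat.find hex' → False := by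
    intro a b a' b' hex hex' hab hab' heq hlt
    set p := Nat.find hex
    set p' := Nat.find hex'
    set c := u (p + 1 + n) with hc
    have hsp := Nat.find_spec hex
    have hsp' := Nat.find_spec hex'
    have hX1 : X (p + 1) := hsp.1
    have hX2 : X (p' + 1) := hsp'.1
    have hb2 : u (p' + 1 + n) = c := heq.symm
    have hup' : u p' ≠ c := by
      intro hcon
      rcases hsp'.2 with ⟨h1, h2⟩ | ⟨h1, h2⟩
      · have e1 : a' = c := by rw [← h1]; exact hcon
        have e2 : b' = c := by rw [← h2]; exact hb2
        exact hab' (e1.trans e2.symm)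
      · have e1 : b' = c := by rw [← h1]; exact hcon
        have e2 : a' = c := by rw [← h2]; exact hb2
        exact hab' (e2.trans e1.symm)
    obtain ⟨s, hs, hXs, hus, husn⟩ :=
      P.slot_key (Or.inr hup') hX2 hb2 (show p + 1 < p' + 1 by omega) hX1 rfl
    -- Rl a' b' s
    have hRs : Rl a' b' s := by
      refine ⟨hXs, ?_⟩
      rcases hsp'.2 with ⟨h1, h2⟩ | ⟨h1, h2⟩
      · have e2 : b' = c := by rw [← h2]; exact hb2
        exact Or.inr ⟨hus.trans e2.symm, husn.trans h1⟩
      · have e2 : a' = c := by rw [← h2]; exact hb2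
        exact Or.inl ⟨hus.trans e2.symm, husn.trans h1⟩
    exact Nat.find_min hex' hs hRs
  -- edges of G and their form
  have hedge_form : ∀ e ∈ G.edgeSet, ∃ x y : ↥Em, e = s(x, y) ∧ x ≠ y ∧
      ∃ p, Rl (x : A) (y : A) p := by
    intro e he
    induction e with
    | _ x y =>
      rw [SimpleGraph.mem_edgeSet, hadj_iff] at he
      exact ⟨x, y, rfl, he.1, he.2⟩
  have hσval : ∀ (x y : ↥Em) (hex : ∃ p, Rl (x : A) (y : A) p),
      σ s(x, y) = u (Nat.find hex + 1 + n) := by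
    intro x y hex
    rw [hσ]
    simp only [Sym2.lift_mk]
    rw [hF]
    simp only [dif_pos hex]
  -- injectivity of σ on edges
  have hinj : Set.InjOn σ G.edgeSet := by
    intro e he e' he' heq
    obtain ⟨x, y, rfl, hxy, hex⟩ := hedge_form e he
    obtain ⟨x', y', rfl, hxy', hex'⟩ := hedge_form e' he'
    rw [hσval x y hex, hσval x' y' hex'] at heq
    have hne1 : (x : A) ≠ (y : A) := fun hc => hxy (Subtype.ext hc)
    have hne1' : (x' : A) ≠ (y' : A) := fun hc => hxy' (Subtype.ext hc)
    rcases Nat.lt_trichotomy (Nat.find hex) (Nat.find hex') with h | h | h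
    · exact absurd (keyT _ _ _ _ hex hex' hne1 hne1' heq h) (by simp)
    · -- same position: the unordered pairs coincide
      have hsp := Nat.find_spec hex
      have hsp' := Nat.find_spec hex'
      rw [h] at hsp
      rcases hsp.2 with ⟨hA, hB⟩ | ⟨hA, hB⟩ <;> rcases hsp'.2 with ⟨hA', hB'⟩ | ⟨hA', hB'⟩
      · rw [Subtype.ext (hA.symm.trans hA'), Subtype.ext (hB.symm.trans hB')]
      · rw [Subtype.ext (hA.symm.trans hA'), Subtype.ext (hB.symm.trans hB'), Sym2.eq_swap]
      · rw [Subtype.ext (hB.symm.trans hB'), Subtype.ext (hA.symm.trans hA'), Sym2.eq_swap]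
      · rw [Subtype.ext (hB.symm.trans hB'), Subtype.ext (hA.symm.trans hA')]
    · exact absurd (keyT _ _ _ _ hex' hex hne1' hne1 heq.symm h) (by simp)
  -- image of σ
  have himg : ∀ e ∈ G.edgeSet, σ e ∈ Em := by
    intro e he
    obtain ⟨x, y, rfl, hxy, hex⟩ := hedge_form e he
    rw [hσval x y hex]
    exact hEmT _ (Nat.find_spec hex).1
  -- missing slot
  have hmiss : ∃ v₀ ∈ Em, ∀ e ∈ G.edgeSet, σ e ≠ v₀ := by
    by_cases hX0 : X 0
    · refine ⟨u n, by simpa using hEmT 0 hX0, ?_⟩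
      intro e he heq
      obtain ⟨x, y, rfl, hxy, hex⟩ := hedge_form e he
      rw [hσval x y hex] at heq
      have hne1 : (x : A) ≠ (y : A) := fun hc => hxy (Subtype.ext hc)
      set p := Nat.find hex
      have hsp := Nat.find_spec hex
      have hup : u p ≠ u (p + 1 + n) := by
        intro hcon
        rcases hsp.2 with ⟨h1, h2⟩ | ⟨h1, h2⟩
        · exact hne1 (h1.symm.trans (hcon.trans h2))
        · exact hne1 ((h2.symm.trans hcon.symm).trans h1)
      obtain ⟨s, hs, hXs, hus, husn⟩ :=
        P.slot_key (Or.inr (fun hc => hup (hc.trans heq.symm))) hsp.1 heq (Nat.succ_pos _) hX0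
          (by simp)
      refine Nat.find_min hex hs ⟨hXs, ?_⟩
      rcases hsp.2 with ⟨h1, h2⟩ | ⟨h1, h2⟩
      · exact Or.inr ⟨hus.trans (h2.symm.trans heq).symm, husn.trans h1⟩
      · exact Or.inl ⟨hus.trans (h2.symm.trans heq).symm, husn.trans h1⟩
    · have hfex : ∃ k, X k := by
        obtain ⟨p, hp, -⟩ := hEmX a₀ ha₀
        exact ⟨p + 1, hp⟩
      have hfpos : 0 < Nat.find hfex := by
        rcases Nat.eq_zero_or_pos (Nat.find hfex) with h | h
        · exact absurd (h ▸ Nat.find_spec hfex) hX0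
        · exact h
      obtain ⟨p₀, hp₀⟩ : ∃ p₀, p₀ + 1 = Nat.find hfex := ⟨Nat.find hfex - 1, by omega⟩
      have hfX : X (p₀ + 1) := by rw [hp₀]; exact Nat.find_spec hfex
      have hearly : ∀ k, k ≤ p₀ → ¬ X k ∧ ¬ X k := by
        intro k hk
        have := Nat.find_min hfex (show k < Nat.find hfex by omega)
        exact ⟨this, this⟩
      refine ⟨u p₀, hEmP p₀ hfX, ?_⟩
      intro e he heq
      obtain ⟨x, y, rfl, hxy, hex⟩ := hedge_form e he
      rw [hσval x y hex] at heq
      have hne1 : (x : A) ≠ (y : A) := fun hc => hxy (Subtype.ext hc)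
      set p := Nat.find hex
      have hsp := Nat.find_spec hex
      have hup : u p ≠ u (p + 1 + n) := by
        intro hcon
        rcases hsp.2 with ⟨h1, h2⟩ | ⟨h1, h2⟩
        · exact hne1 (h1.symm.trans (hcon.trans h2))
        · exact hne1 ((h2.symm.trans hcon.symm).trans h1)
      obtain ⟨s, hs, hXs, hus, husn⟩ :=
        P.slot_key_first (Or.inr (fun hc => hup (hc.trans heq.symm))) hfX hearly
          hsp.1 rfl heq
      refine Nat.find_min hex hs ⟨hXs, ?_⟩
      rcases hsp.2 with ⟨h1, h2⟩ | ⟨h1, h2⟩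
      · exact Or.inr ⟨hus.trans (h2.symm.trans heq).symm, husn.trans h1⟩
      · exact Or.inl ⟨hus.trans (h2.symm.trans heq).symm, husn.trans h1⟩
  -- cardinality bound
  have hcard : (G.edgeSet : Set (Sym2 (↥Em))).ncard + 1 ≤ Em.ncard := by
    obtain ⟨v₀, hv₀T, hv₀⟩ := hmiss
    have h1 : (G.edgeSet : Set (Sym2 (↥Em))).ncard ≤ (Em \ {v₀}).ncard := by
      refine Set.ncard_le_ncard_of_injOn σ ?_ hinj (Set.toFinite _)
      intro e he
      exact ⟨himg e he, by simpa using hv₀ e he⟩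
    have h2 : (Em \ {v₀}).ncard = Em.ncard - 1 :=
      Set.ncard_diff_singleton_of_mem hv₀T
    have h4 : 1 ≤ Em.ncard := (Set.ncard_pos (Set.toFinite _)).2 ⟨v₀, hv₀T⟩
    omega
  -- connectivity
  haveI hnonempty : Nonempty (↥Em) := ⟨⟨a₀, ha₀⟩⟩
  set vert : ℕ → ↥Em := fun p =>
    if h : X (p + 1) then ⟨u p, hEmP p h⟩ else ⟨a₀, ha₀⟩ with hvert
  have vertX : ∀ p (h : X (p + 1)), vert p = ⟨u p, hEmP p h⟩ := by
    intro p h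
    rw [hvert]
    simp only [dif_pos h]
  have reach : ∀ d p q, p + d = q → X (p + 1) → X (q + 1) →
      G.Reachable (vert p) (vert q) := by
    intro d
    induction d using Nat.strong_induction_on with
    | _ d IH =>
      intro p q hpq hp hq
      rcases Nat.eq_zero_or_pos d with rfl | hd
      · have : p = q := by omega
        subst this
        exact SimpleGraph.Reachable.refl _
      by_cases hmid : ∃ k, p < k ∧ k < q ∧ X (k + 1)
      · obtain ⟨k, hk1, hk2, hk3⟩ := hmid
        exact (IH (k - p) (by omega) p k (by omega) hp hk3).trans
          (IH (q - k) (by omega) k q (by omega) hk3 hq)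
      · push_neg at hmid
        have hcomp : ∀ k, p + 1 < k → k < q + 1 → ¬ X k ∧ ¬ X k := by
          intro k h1 h2
          obtain ⟨k', rfl⟩ : ∃ k', k = k' + 1 := ⟨k - 1, by omega⟩
          have := hmid k' (by omega) (by omega)
          exact ⟨this, this⟩
        have hpal := P.mirror (p + 1) d (q + 1) hd (by omega) hp hq hcomp
        have hedge : u (p + 1 + n) = u q := by
          obtain ⟨d1, hd1⟩ : ∃ d1, d1 + 1 = d := ⟨d - 1, by omega⟩
          have := hpal n d1 (by omega)
          rwa [show p + 1 + d1 = q from by omega] at this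
        by_cases hupq : u p = u q
        · rw [vertX p hp, vertX q hq]
          have : (⟨u p, hEmP p hp⟩ : ↥Em) = ⟨u q, hEmP q hq⟩ := Subtype.ext hupq
          rw [this]
        · refine SimpleGraph.Adj.reachable ?_
          rw [vertX p hp, vertX q hq]
          rw [hadj_iff]
          exact ⟨fun hc => hupq (congrArg Subtype.val hc), p, hp, Or.inl ⟨rfl, hedge⟩⟩
  have hconn : G.Connected := by
    refine SimpleGraph.Connected.mk ?_
    have hreal : ∀ z : ↥Em, ∃ p, X (p + 1) ∧ vert p = z := by
      rintro ⟨a, ha⟩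
      obtain ⟨p, hp, hpa⟩ := hEmX a ha
      exact ⟨p, hp, by rw [vertX p hp]; exact Subtype.ext hpa⟩
    intro x y
    obtain ⟨px, hpx, hvx⟩ := hreal x
    obtain ⟨py, hpy, hvy⟩ := hreal y
    rw [← hvx, ← hvy]
    rcases le_total px py with h | h
    · exact reach (py - px) px py (by omega) hpx hpy
    · exact (reach (px - py) py px (by omega) hpy hpx).symm
  refine isTree_of_conn_card hconn ?_
  have e1 : Nat.card G.edgeSet = (G.edgeSet : Set (Sym2 (↥Em))).ncard :=
    Nat.card_coe_set_eq _
  have e2 : Fintype.card (↥(Eminus u w)) = Em.ncard := by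
    rw [← Nat.card_eq_fintype_card, Nat.card_coe_set_eq]
  omega

end ZDC1

open ZDC1

open ZDC in
/-- If `L(u)` is closed under reversal and `D(u) < +∞`, then there is a
positive integer `K` such that for every factor `w` of length at least `K`, the graph
`Γ(w)` is a tree if `w` is not a palindrome, and `Θ(w)` is a tree if `w` is a palindrome. -/
theorem stmt_5 {A : Type*} [Fintype A] (u : ℕ → A)
    (hclosed : ClosedUnderReversal u) (hfin : Defect u ≠ ⊤) :
    ∃ K : ℕ, 0 < K ∧ ∀ w ∈ Lang u, K ≤ w.length →
      (w.reverse ≠ w → (GammaGraph u w).IsTree) ∧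
      (w.reverse = w → (ThetaGraph u w).IsTree) := by
  obtain ⟨N0, hstar⟩ := exists_hstar (u := u) hfin
  refine ⟨N0 + 1, by omega, ?_⟩
  intro w hw hlen
  obtain ⟨i₀, hocc⟩ := mem_lang_iff.1 hw
  constructor
  · -- non-palindromic case
    intro hnp
    have P : Core u N0 w.length (fun i => EqW u i₀ i w.length)
        (fun i => RevW u i₀ i w.length) :=
      { star := hstar
        hn := hlen
        xx := fun i j hi hj => eqw_trans (eqw_symm hi) hj
        yy := fun i j hi hj => revw_revw (revw_symm hi) hj
        xy := fun i j hi hj => eqw_revw (eqw_symm hi) hj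
        rxy := fun s ℓ t t' hp ht hX => eqw_revw hX (reflect hp ht)
        ryx := fun s ℓ t t' hp ht hY => revw_revw hY (reflect hp ht) }
    have hne : ∀ i, ¬ (EqW u i₀ i w.length ∧ RevW u i₀ i w.length) := by
      rintro i ⟨hX, hY⟩
      exact hnp ((pal_iff_reverse_self hocc).2 (revw_eqw hY (eqw_symm hX)))
    refine gamma_tree_abstract P hne ?_ ?_ ?_ ?_ ?_ ?_ ?_ ?_
    · intro a b
      constructor
      · intro hab
        obtain ⟨p, hX, ha, hb⟩ := eb_realize hocc hab
        exact ⟨p, Or.inl ⟨hX, ha, hb⟩⟩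
      · rintro ⟨p, ⟨hX, ha, hb⟩ | ⟨hY, hb, ha⟩⟩
        · have := eb_of_X hocc hX
          rwa [ha, hb] at this
        · have := eb_of_Y hclosed hocc hY
          rwa [ha, hb] at this
    · exact fun a ha => em_realize hocc ha
    · exact fun b hb => ep_realize hclosed hocc hb
    · exact fun p h => em_of_X hocc h
    · exact fun p h => ep_of_Y hclosed hocc h
    · exact fun t h => em_of_Y' hclosed hocc h
    · exact fun t h => ep_of_X' hocc h
    · exact em_nonempty hclosed hocc
  · -- palindromic case
    intro hp
    have hpw : Pal u i₀ w.length := (pal_iff_reverse_self hocc).1 hp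
    have P : Core u N0 w.length (fun i => EqW u i₀ i w.length)
        (fun i => EqW u i₀ i w.length) :=
      { star := hstar
        hn := hlen
        xx := fun i j hi hj => eqw_trans (eqw_symm hi) hj
        yy := fun i j hi hj => eqw_trans (eqw_symm hi) hj
        xy := fun i j hi hj => eqw_revw (eqw_symm hi) (revw_eqw hpw hj)
        rxy := fun s ℓ t t' hpal ht hX => revw_revw (revw_eqw hpw hX) (reflect hpal ht)
        ryx := fun s ℓ t t' hpal ht hX => revw_revw (revw_eqw hpw hX) (reflect hpal ht) }
    have hebsymm : ∀ a b : A, (b, a) ∈ Eboth u w → (a, b) ∈ Eboth u w := by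
      intro a b hba
      have := hclosed _ hba
      rw [show (Prod.fst (b, a) :: (w ++ [Prod.snd (b, a)])).reverse
          = a :: (w.reverse ++ [b]) from by simp, hp] at this
      exact this
    refine theta_tree_abstract P ?_ ?_ ?_ ?_ ?_
    · intro a b
      constructor
      · intro hab
        obtain ⟨p, hX, ha, hb⟩ := eb_realize hocc hab
        exact ⟨p, hX, Or.inl ⟨ha, hb⟩⟩
      · rintro ⟨p, hX, ⟨ha, hb⟩ | ⟨hb, ha⟩⟩
        · have := eb_of_X hocc hX
          rwa [ha, hb] at this
        · have := eb_of_X hocc hX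
          rw [hb, ha] at this
          exact hebsymm a b this
    · exact fun a ha => em_realize hocc ha
    · exact fun p h => em_of_X hocc h
    · exact fun t h => em_of_Y' hclosed hocc (revw_eqw hpw h)
    · exact em_nonempty hclosed hocc
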